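/- arXiv:2201.01598 — 5 statements merged into one kernel-verified Lean document; each statement's English description precedes it below -/
import Mathlib

section
/- Conservation of the center of position: let N ≥ 2, J ∈ ℝ, α, β > 0, and let x : ℝ → (Fin N → ℝ²) and θ : ℝ → (Fin N → ℝ) be such that x_i(t) ≠ x_j(t) for all t and all i ≠ j, and for every i and every t the map t ↦ x_i(t) has derivative (1/(N−1)) ∑_{j≠i} Γ(x_j(t) − x_i(t), θ_j(t) − θ_i(t)) at t. Then the center of position (1/N) ∑_{i=1}^{N} x_i(t) is constant in t, i.e., ∑_i x_i(t) = ∑_i x_i(0) for all t. -/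
/-- The swarmalator spatial interaction kernel on ℝ²:
`Γ(x, θ) = (x/‖x‖^α)(1 + J cos θ) − x/‖x‖^β`. -/
noncomputable def swarmKernel (J α β : ℝ) (x : EuclideanSpace ℝ (Fin 2)) (θ : ℝ) :
    EuclideanSpace ℝ (Fin 2) :=
  ((1 + J * Real.cos θ) / ‖x‖ ^ α) • x - (‖x‖ ^ β)⁻¹ • x

lemma swarmKernel_neg (J α β : ℝ) (x : EuclideanSpace ℝ (Fin 2)) (θ : ℝ) :
    swarmKernel J α β (-x) (-θ) = - swarmKernel J α β x θ := by
  simp [swarmKernel, norm_neg, Real.cos_neg, smul_neg, sub_eq_add_neg, neg_add]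
  abel

lemma swarmKernel_zero (J α β : ℝ) (θ : ℝ) :
    swarmKernel J α β 0 θ = 0 := by
  simp [swarmKernel]

/-- Conservation of the center of position for the swarmalator spatial dynamics
`ẋ_i = (1/(N−1)) ∑_{j≠i} Γ(x_j − x_i, θ_j − θ_i)`. -/
theorem center_of_position_conserved (N : ℕ) (hN : 2 ≤ N) (J α β : ℝ)
    (hα : 0 < α) (hβ : 0 < β)
    (x : ℝ → Fin N → EuclideanSpace ℝ (Fin 2)) (θ : ℝ → Fin N → ℝ)
    (hsep : ∀ t : ℝ, ∀ i j : Fin N, i ≠ j → x t i ≠ x t j)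
    (hode : ∀ (i : Fin N) (t : ℝ),
      HasDerivAt (fun s => x s i)
        ((1 / ((N : ℝ) - 1)) • ∑ j ∈ Finset.univ.erase i,
          swarmKernel J α β (x t j - x t i) (θ t j - θ t i)) t) :
    ∀ t : ℝ, ∑ i : Fin N, x t i = ∑ i : Fin N, x 0 i := by
  set S : ℝ → EuclideanSpace ℝ (Fin 2) := fun t => ∑ i : Fin N, x t i with hS
  have key : ∀ t : ℝ, HasDerivAt S 0 t := by
    intro t
    set F : Fin N → Fin N → EuclideanSpace ℝ (Fin 2) := fun i j =>
      swarmKernel J α β (x t j - x t i) (θ t j - θ t i) with hF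
    have hanti : ∀ i j, F i j = - F j i := by
      intro i j
      have := swarmKernel_neg J α β (x t i - x t j) (θ t i - θ t j)
      simpa [hF, neg_sub] using this
    have hdiag : ∀ i, F i i = 0 := by
      intro i; simp [hF, swarmKernel_zero]
    have hsum : ∑ i : Fin N, (1 / ((N : ℝ) - 1)) • ∑ j ∈ Finset.univ.erase i, F i j = 0 := by
      rw [← Finset.smul_sum]
      have h1 : ∀ i : Fin N, ∑ j ∈ Finset.univ.erase i, F i j = ∑ j : Fin N, F i j := by
        intro i
        rw [← Finset.add_sum_erase Finset.univ (F i) (Finset.mem_univ i), hdiag i, zero_add]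
      have h2 : (∑ i : Fin N, ∑ j : Fin N, F i j) = 0 := by
        have hswap : (∑ i : Fin N, ∑ j : Fin N, F i j)
            = ∑ i : Fin N, ∑ j : Fin N, F j i := Finset.sum_comm
        have : (∑ i : Fin N, ∑ j : Fin N, F i j)
            = - ∑ i : Fin N, ∑ j : Fin N, F i j := by
          conv_lhs => rw [hswap]
          simp only [← Finset.sum_neg_distrib]
          exact Finset.sum_congr rfl fun i _ => Finset.sum_congr rfl fun j _ =>
            (hanti j i)
        have h2 : (2:ℝ) • (∑ i : Fin N, ∑ j : Fin N, F i j) = 0 := by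
          rw [two_smul]; nth_rewrite 1 [this]; abel
        have := smul_eq_zero.mp h2
        simpa using this
      simp only [h1, h2, smul_zero]
    have h := HasDerivAt.fun_sum (fun i (_ : i ∈ Finset.univ) => hode i t)
    rw [hsum] at h
    exact h
  intro t
  have hconst : ∀ s : ℝ, S s = S 0 := by
    intro s
    have := is_const_of_deriv_eq_zero (f := S)
      (fun u => (key u).differentiableAt) (fun u => (key u).deriv) s 0
    exact this
  exact hconst t
end

section
/- Finite-time collision avoidance: let N ≥ 2, 0 ≤ J < 1, and exponents 1 ≤ α < β. Let θ : [0,∞) → (Fin N → ℝ) be continuous, and let x : [0,∞) → (Fin N → ℝ²) be continuous with pairwise distinct initial positions (x_i(0) ≠ x_j(0) for all i ≠ j) and such that for every i and every t ≥ 0 at which all positions are pairwise distinct, t ↦ x_i(t) has derivative (1/(N−1)) ∑_{j≠i} [ (x_j(t)−x_i(t))/|x_j(t)−x_i(t)|^α · (1 + J·cos(θ_j(t)−θ_i(t))) − (x_j(t)−x_i(t))/|x_j(t)−x_i(t)|^β ] at t. Then the swarmalators never collide: x_i(t) ≠ x_j(t) for all t ∈ [0,∞) and all i ≠ j. -/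
open scoped RealInnerProductSpace

section SwarmAux
set_option linter.unusedSectionVars false
variable {E : Type*} [NormedAddCommGroup E] [InnerProductSpace ℝ E]
variable {ι : Type*} [DecidableEq ι]

lemma swarm_swap_sum (s : Finset ι) (y w : ι → E) :
    ∑ k ∈ s, ∑ l ∈ s, ⟪y k - y l, w k - w l⟫
      = 2 * ∑ k ∈ s, ∑ l ∈ s, ⟪y k - y l, w k⟫ := by
  have h1 : ∀ k l : ι, ⟪y k - y l, w k - w l⟫
      = ⟪y k - y l, w k⟫ + ⟪y l - y k, w l⟫ := by
    intro k l
    have : (⟪y l - y k, w l⟫) = - ⟪y k - y l, w l⟫ := by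
      rw [show y l - y k = -(y k - y l) by abel, inner_neg_left]
    rw [this, inner_sub_right]; ring
  calc ∑ k ∈ s, ∑ l ∈ s, ⟪y k - y l, w k - w l⟫
      = ∑ k ∈ s, ∑ l ∈ s, (⟪y k - y l, w k⟫ + ⟪y l - y k, w l⟫) := by
        exact Finset.sum_congr rfl fun k _ => Finset.sum_congr rfl fun l _ => h1 k l
    _ = (∑ k ∈ s, ∑ l ∈ s, ⟪y k - y l, w k⟫)
        + ∑ k ∈ s, ∑ l ∈ s, ⟪y l - y k, w l⟫ := by
        rw [← Finset.sum_add_distrib]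
        exact Finset.sum_congr rfl fun k _ => Finset.sum_add_distrib
    _ = 2 * ∑ k ∈ s, ∑ l ∈ s, ⟪y k - y l, w k⟫ := by
        rw [Finset.sum_comm (f := fun k l => ⟪y l - y k, w l⟫)]; ring

lemma swarm_antisym_id (s : Finset ι) (y : ι → E) (F : ι → ι → E)
    (hF : ∀ k j, F j k = - F k j) :
    ∑ k ∈ s, ∑ l ∈ s, ⟪y k - y l, ∑ j ∈ s, F k j⟫
      = (s.card : ℝ) / 2 * ∑ k ∈ s, ∑ j ∈ s, ⟪y k - y j, F k j⟫ := by
  set G : ι → E := fun k => ∑ j ∈ s, F k j with hG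
  have hsum0 : ∑ k ∈ s, G k = 0 := by
    have h2 : ∑ k ∈ s, ∑ j ∈ s, F k j = - ∑ k ∈ s, ∑ j ∈ s, F k j := by
      nth_rewrite 1 [Finset.sum_comm]
      rw [← Finset.sum_neg_distrib]
      refine Finset.sum_congr rfl fun a _ => ?_
      rw [← Finset.sum_neg_distrib]
      exact Finset.sum_congr rfl fun b _ => hF a b
    have h3 : ∑ k ∈ s, ∑ j ∈ s, F k j + ∑ k ∈ s, ∑ j ∈ s, F k j = 0 := by
      nth_rewrite 2 [h2]; abel
    have h4 : (2:ℝ) • (∑ k ∈ s, ∑ j ∈ s, F k j) = 0 := by rw [two_smul]; exact h3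
    have h5 := (smul_eq_zero.mp h4).resolve_left (by norm_num)
    simpa [hG] using h5
  have h2 : ∑ k ∈ s, ∑ j ∈ s, ⟪y j, F k j⟫ = - ∑ k ∈ s, ∑ j ∈ s, ⟪y k, F k j⟫ := by
    rw [Finset.sum_comm, ← Finset.sum_neg_distrib]
    refine Finset.sum_congr rfl fun a _ => ?_
    rw [← Finset.sum_neg_distrib]
    refine Finset.sum_congr rfl fun b _ => ?_
    rw [hF a b, inner_neg_right]
  have hT : ∑ k ∈ s, ∑ j ∈ s, ⟪y k - y j, F k j⟫
      = 2 * ∑ k ∈ s, ⟪y k, G k⟫ := by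
    have h4 : ∑ k ∈ s, ∑ j ∈ s, ⟪y k - y j, F k j⟫
        = (∑ k ∈ s, ∑ j ∈ s, ⟪y k, F k j⟫) - ∑ k ∈ s, ∑ j ∈ s, ⟪y j, F k j⟫ := by
      rw [← Finset.sum_sub_distrib]
      refine Finset.sum_congr rfl fun k _ => ?_
      rw [← Finset.sum_sub_distrib]
      exact Finset.sum_congr rfl fun j _ => inner_sub_left _ _ _
    have h3 : ∑ k ∈ s, ⟪y k, G k⟫ = ∑ k ∈ s, ∑ j ∈ s, ⟪y k, F k j⟫ :=
      Finset.sum_congr rfl fun k _ => inner_sum _ _ _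
    rw [h4, h2, h3]; ring
  have hL : ∑ k ∈ s, ∑ l ∈ s, ⟪y k - y l, G k⟫
      = (s.card : ℝ) * ∑ k ∈ s, ⟪y k, G k⟫ := by
    have h1 : ∀ k ∈ s, ∑ l ∈ s, ⟪y k - y l, G k⟫
        = (s.card : ℝ) * ⟪y k, G k⟫ - ⟪∑ l ∈ s, y l, G k⟫ := by
      intro k _
      have hterm : ∀ l : ι, ⟪y k - y l, G k⟫ = ⟪y k, G k⟫ - ⟪y l, G k⟫ :=
        fun l => inner_sub_left _ _ _
      rw [Finset.sum_congr rfl (fun l _ => hterm l), Finset.sum_sub_distrib,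
        Finset.sum_const, sum_inner, nsmul_eq_mul]
    rw [Finset.sum_congr rfl h1, Finset.sum_sub_distrib, Finset.mul_sum]
    have : ∑ k ∈ s, ⟪∑ l ∈ s, y l, G k⟫ = ⟪∑ l ∈ s, y l, (0:E)⟫ := by
      rw [← inner_sum, hsum0]
    rw [this, inner_zero_right, sub_zero, ← Finset.mul_sum]
  rw [hL, hT]; ring

lemma swarm_pair_inner (c ρ σ : ℝ) (w : E) (hw : w ≠ 0) :
    ⟪-w, (c / ‖w‖ ^ ρ) • w - (‖w‖ ^ σ)⁻¹ • w⟫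
      = ‖w‖ ^ (2 - σ) - c * ‖w‖ ^ (2 - ρ) := by
  have hr : (0:ℝ) < ‖w‖ := norm_pos_iff.mpr hw
  have hρ : (0:ℝ) < ‖w‖ ^ ρ := Real.rpow_pos_of_pos hr ρ
  have hσ : (0:ℝ) < ‖w‖ ^ σ := Real.rpow_pos_of_pos hr σ
  rw [inner_sub_right, real_inner_smul_right, real_inner_smul_right, inner_neg_left,
    real_inner_self_eq_norm_sq, Real.rpow_sub hr, Real.rpow_sub hr, Real.rpow_two]
  field_simp
  ring

lemma swarm_pair_norm_le (c ρ σ δ : ℝ) (hc : |c| ≤ 2) (hρ : 1 ≤ ρ) (hσ : 1 ≤ σ)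
    (hδ : 0 < δ) (w : E) (hw : δ ≤ ‖w‖) :
    ‖(c / ‖w‖ ^ ρ) • w - (‖w‖ ^ σ)⁻¹ • w‖ ≤ 2 * δ ^ (1 - ρ) + δ ^ (1 - σ) := by
  have hr : (0:ℝ) < ‖w‖ := lt_of_lt_of_le hδ hw
  have h1 : ‖(c / ‖w‖ ^ ρ) • w‖ = |c| * ‖w‖ ^ (1 - ρ) := by
    rw [norm_smul, Real.norm_eq_abs, abs_div, abs_of_pos (Real.rpow_pos_of_pos hr _),
      Real.rpow_sub hr, Real.rpow_one]
    field_simp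
  have h2 : ‖(‖w‖ ^ σ)⁻¹ • w‖ = ‖w‖ ^ (1 - σ) := by
    rw [norm_smul, Real.norm_eq_abs, abs_inv, abs_of_pos (Real.rpow_pos_of_pos hr _),
      Real.rpow_sub hr, Real.rpow_one]
    field_simp
  calc ‖(c / ‖w‖ ^ ρ) • w - (‖w‖ ^ σ)⁻¹ • w‖
      ≤ ‖(c / ‖w‖ ^ ρ) • w‖ + ‖(‖w‖ ^ σ)⁻¹ • w‖ := norm_sub_le _ _
    _ = |c| * ‖w‖ ^ (1 - ρ) + ‖w‖ ^ (1 - σ) := by rw [h1, h2]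
    _ ≤ 2 * δ ^ (1 - ρ) + δ ^ (1 - σ) := by
        have hb1 : ‖w‖ ^ (1 - ρ) ≤ δ ^ (1 - ρ) :=
          Real.rpow_le_rpow_of_nonpos hδ hw (by linarith)
        have hb2 : ‖w‖ ^ (1 - σ) ≤ δ ^ (1 - σ) :=
          Real.rpow_le_rpow_of_nonpos hδ hw (by linarith)
        have hρpos : (0:ℝ) < ‖w‖ ^ (1 - ρ) := Real.rpow_pos_of_pos hr _
        nlinarith [abs_nonneg c]

lemma swarm_pair_lower (c r α β : ℝ) (hr : 0 < r) (hc : c ≤ 2)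
    (hquarter : r ^ (β - α) ≤ 1 / 4) :
    (1 / 2) * r ^ (2 - β) ≤ r ^ (2 - β) - c * r ^ (2 - α) := by
  have key : r ^ (2 - α) = r ^ (β - α) * r ^ (2 - β) := by
    rw [← Real.rpow_add hr]; ring_nf
  have h2β : (0:ℝ) < r ^ (2 - β) := Real.rpow_pos_of_pos hr _
  have h2α : (0:ℝ) < r ^ (2 - α) := Real.rpow_pos_of_pos hr _
  nlinarith

end SwarmAux

set_option maxHeartbeats 2000000

/-- Finite-time collision avoidance for swarmalators with spatial dynamics
`ẋ_i = (1/(N−1)) ∑_{j≠i} [ (x_j−x_i)/‖x_j−x_i‖^α (1 + J cos(θ_j−θ_i))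
  − (x_j−x_i)/‖x_j−x_i‖^β ]`. -/
theorem collision_avoidance (N : ℕ) (hN : 2 ≤ N) (J : ℝ) (hJ0 : 0 ≤ J) (hJ1 : J < 1)
    (α β : ℝ) (hα : 1 ≤ α) (hαβ : α < β)
    (θ : ℝ → Fin N → ℝ) (hθc : ∀ i : Fin N, ContinuousOn (fun t => θ t i) (Set.Ici 0))
    (x : ℝ → Fin N → EuclideanSpace ℝ (Fin 2))
    (hxc : ∀ i : Fin N, ContinuousOn (fun t => x t i) (Set.Ici 0))
    (hinit : ∀ i j : Fin N, i ≠ j → x 0 i ≠ x 0 j)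
    (hode : ∀ (i : Fin N), ∀ t ∈ Set.Ici (0 : ℝ),
      (∀ k l : Fin N, k ≠ l → x t k ≠ x t l) →
      HasDerivWithinAt (fun s => x s i)
        ((1 / ((N : ℝ) - 1)) • ∑ j ∈ Finset.univ.erase i,
          (((1 + J * Real.cos (θ t j - θ t i)) / ‖x t j - x t i‖ ^ α) • (x t j - x t i)
            - (‖x t j - x t i‖ ^ β)⁻¹ • (x t j - x t i)))
        (Set.Ici 0) t) :
    ∀ t ∈ Set.Ici (0 : ℝ), ∀ i j : Fin N, i ≠ j → x t i ≠ x t j := by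
  classical
  by_contra hcon
  push_neg at hcon
  obtain ⟨t₁, ht₁, i₁, j₁, hij₁, hcol₁⟩ := hcon
  have hN1 : (0:ℝ) < (N:ℝ) - 1 := by
    have : (2:ℝ) ≤ (N:ℝ) := by exact_mod_cast hN
    linarith only [this]
  have hβ1 : 1 < β := lt_of_le_of_lt hα hαβ
  have hβα : 0 < β - α := sub_pos.mpr hαβ
  -- the first collision time
  set f : ℝ → ℝ := fun t =>
    ∏ p ∈ (Finset.univ.offDiag : Finset (Fin N × Fin N)), ‖x t p.1 - x t p.2‖ with hfdef
  have hfc : ContinuousOn f (Set.Ici 0) :=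
    continuousOn_finset_prod _ fun p _ => ((hxc p.1).sub (hxc p.2)).norm
  have hfiff : ∀ t : ℝ, f t = 0 ↔ ∃ i j : Fin N, i ≠ j ∧ x t i = x t j := by
    intro t
    constructor
    · intro h
      obtain ⟨p, hp, hp0⟩ := Finset.prod_eq_zero_iff.mp h
      rw [Finset.mem_offDiag] at hp
      exact ⟨p.1, p.2, hp.2.2, by rwa [norm_eq_zero, sub_eq_zero] at hp0⟩
    · rintro ⟨i, j, hij, hx⟩
      apply Finset.prod_eq_zero (i := (i, j))
      · simp [Finset.mem_offDiag, hij]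
      · rw [norm_eq_zero, sub_eq_zero]; exact hx
  set C : Set ℝ := Set.Ici 0 ∩ f ⁻¹' {0} with hCdef
  have hCclosed : IsClosed C :=
    hfc.preimage_isClosed_of_isClosed isClosed_Ici isClosed_singleton
  have hCne : C.Nonempty :=
    ⟨t₁, ht₁, by simpa using (hfiff t₁).mpr ⟨i₁, j₁, hij₁, hcol₁⟩⟩
  have hCbdd : BddBelow C := ⟨0, fun t ht => ht.1⟩
  set τ : ℝ := sInf C with hτdef
  have hτC : τ ∈ C := hCclosed.csInf_mem hCne hCbdd
  have hτ0 : 0 ≤ τ := hτC.1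
  obtain ⟨i₀, j₀, hij₀, hxeq₀⟩ := (hfiff τ).mp hτC.2
  have hτpos : 0 < τ := by
    rcases eq_or_lt_of_le hτ0 with h | h
    · exfalso; rw [← h] at hxeq₀; exact hinit i₀ j₀ hij₀ hxeq₀
    · exact h
  have hpre : ∀ t : ℝ, 0 ≤ t → t < τ → ∀ k l : Fin N, k ≠ l → x t k ≠ x t l := by
    intro t ht htτ k l hkl hxe
    exact absurd (csInf_le hCbdd ⟨ht, by simpa using (hfiff t).mpr ⟨k, l, hkl, hxe⟩⟩)
      (not_le.mpr htτ)
  -- the cluster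
  set A : Finset (Fin N) := Finset.univ.filter (fun k => x τ k = x τ i₀) with hAdef
  have hmemA : ∀ k, k ∈ A ↔ x τ k = x τ i₀ := by intro k; simp [hAdef]
  have hi₀A : i₀ ∈ A := (hmemA i₀).mpr rfl
  have hj₀A : j₀ ∈ A := (hmemA j₀).mpr hxeq₀.symm
  have hAcard : 0 < A.card := Finset.card_pos.mpr ⟨i₀, hi₀A⟩
  set a : ℝ := (A.card : ℝ) with ha
  have ha1 : 1 ≤ a := by rw [ha]; exact_mod_cast hAcard
  have ha0 : 0 < a := lt_of_lt_of_le zero_lt_one ha1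
  clear_value a
  -- the pairwise force
  set F : ℝ → Fin N → Fin N → EuclideanSpace ℝ (Fin 2) := fun t k j =>
    ((1 + J * Real.cos (θ t j - θ t k)) / ‖x t j - x t k‖ ^ α) • (x t j - x t k)
      - (‖x t j - x t k‖ ^ β)⁻¹ • (x t j - x t k) with hFdef
  have hFdiag : ∀ t k, F t k k = 0 := by intro t k; simp [hFdef, sub_self]
  have hFanti : ∀ t k j, F t j k = - F t k j := by
    intro t k j
    have h1 : x t k - x t j = -(x t j - x t k) := by abel
    have h2 : ‖x t k - x t j‖ = ‖x t j - x t k‖ := norm_sub_rev _ _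
    have h3 : Real.cos (θ t k - θ t j) = Real.cos (θ t j - θ t k) := by
      rw [show θ t k - θ t j = -(θ t j - θ t k) by ring, Real.cos_neg]
    simp only [hFdef, h1, h3, norm_neg, smul_neg]
    abel
  clear_value F
  have hcle : ∀ s : ℝ, 1 + J * Real.cos s ≤ 2 := by
    intro s
    have h1 := Real.cos_le_one s
    nlinarith [h1, hJ0, hJ1.le, mul_nonneg hJ0 (sub_nonneg.mpr h1)]
  have hcabs : ∀ s : ℝ, |1 + J * Real.cos s| ≤ 2 := by
    intro s
    rw [abs_le]
    constructor
    · have h1 := Real.neg_one_le_cos s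
      nlinarith [h1, hJ0, hJ1.le, mul_nonneg hJ0 (sub_nonneg.mpr h1)]
    · exact hcle s
  -- the external bound constant
  set M₀ : ℝ := 1 + ∑ p ∈ A ×ˢ (Finset.univ \ A),
      (2 * (‖x τ p.2 - x τ p.1‖ / 2) ^ (1 - α) + (‖x τ p.2 - x τ p.1‖ / 2) ^ (1 - β))
    with hM₀def
  have hsepτ : ∀ p : Fin N × Fin N, p ∈ A ×ˢ (Finset.univ \ A) →
      0 < ‖x τ p.2 - x τ p.1‖ / 2 := by
    intro p hp
    rw [Finset.mem_product] at hp
    have h1 : x τ p.1 = x τ i₀ := (hmemA p.1).mp hp.1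
    have h2 : x τ p.2 ≠ x τ i₀ := by
      have := (Finset.mem_sdiff.mp hp.2).2
      simpa [hmemA] using this
    have hne : x τ p.2 - x τ p.1 ≠ 0 := by rw [h1, sub_ne_zero]; exact h2
    exact half_pos (norm_pos_iff.mpr hne)
  have hM₀1 : 1 ≤ M₀ := by
    rw [hM₀def]
    have h : 0 ≤ ∑ p ∈ A ×ˢ (Finset.univ \ A),
        (2 * (‖x τ p.2 - x τ p.1‖ / 2) ^ (1 - α) + (‖x τ p.2 - x τ p.1‖ / 2) ^ (1 - β)) :=
      Finset.sum_nonneg fun p hp => by positivity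
    linarith only [h]
  have hM₀pos : 0 < M₀ := lt_of_lt_of_le zero_lt_one hM₀1
  clear_value M₀
  -- window
  obtain ⟨ε, hεpos, hwin⟩ : ∃ ε > 0, ∀ t ∈ Set.Icc (τ - ε) τ, ∀ k ∈ A,
      ∀ j ∈ Finset.univ \ A, ‖x τ j - x τ k‖ / 2 ≤ ‖x t j - x t k‖ := by
    have hev : ∀ᶠ t in nhds τ, ∀ k ∈ A, ∀ j ∈ (Finset.univ \ A : Finset (Fin N)),
        ‖x τ j - x τ k‖ / 2 ≤ ‖x t j - x t k‖ := by
      rw [Finset.eventually_all]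
      intro k hk
      rw [Finset.eventually_all]
      intro j hj
      have hca : ContinuousAt (fun t => ‖x t j - x t k‖) τ :=
        (((hxc j).sub (hxc k)).norm).continuousAt (Ici_mem_nhds hτpos)
      have hpos : ‖x τ j - x τ k‖ / 2 < ‖x τ j - x τ k‖ := by
        have := hsepτ (k, j) (Finset.mem_product.mpr ⟨hk, hj⟩)
        simp only at this
        linarith only [this]
      exact (Filter.Tendsto.eventually_const_lt hpos hca).mono fun t ht => ht.le
    obtain ⟨ε, hε, hball⟩ := Metric.eventually_nhds_iff.mp hev
    refine ⟨ε / 2, half_pos hε, fun t ht k hk j hj => hball ?_ k hk j hj⟩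
    rw [Real.dist_eq, abs_sub_lt_iff]
    constructor <;> [linarith only [ht.2, hε]; linarith only [ht.1, hε]]
  -- external force bound
  have hFle : ∀ t ∈ Set.Icc (τ - ε) τ, ∀ k ∈ A, ∀ j ∈ Finset.univ \ A,
      ‖F t k j‖ ≤ M₀ := by
    intro t ht k hk j hj
    have hδ := hsepτ (k, j) (Finset.mem_product.mpr ⟨hk, hj⟩)
    simp only at hδ
    have hw : ‖x τ j - x τ k‖ / 2 ≤ ‖x t j - x t k‖ := hwin t ht k hk j hj
    have hb := swarm_pair_norm_le (1 + J * Real.cos (θ t j - θ t k)) α β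
      (‖x τ j - x τ k‖ / 2) (hcabs _) hα (le_of_lt (lt_of_le_of_lt hα hαβ))
      hδ (x t j - x t k) hw
    have hsum : 2 * (‖x τ j - x τ k‖ / 2) ^ (1 - α) + (‖x τ j - x τ k‖ / 2) ^ (1 - β)
        ≤ M₀ := by
      rw [hM₀def]
      have hterm := Finset.single_le_sum
        (f := fun p : Fin N × Fin N =>
          2 * (‖x τ p.2 - x τ p.1‖ / 2) ^ (1 - α) + (‖x τ p.2 - x τ p.1‖ / 2) ^ (1 - β))
        (fun p hp => by positivity)
        (show (k, j) ∈ A ×ˢ (Finset.univ \ A) from Finset.mem_product.mpr ⟨hk, hj⟩)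
      simp only at hterm
      linarith only [hterm]
    simp only [hFdef]
    linarith only [hb, hsum]
  -- the quantity Q
  set Q : ℝ → ℝ := fun t => ∑ k ∈ A, ∑ l ∈ A, ⟪x t k - x t l, x t k - x t l⟫ with hQdef
  have hQc : ContinuousOn Q (Set.Ici 0) := by
    apply continuousOn_finset_sum
    intro k _
    apply continuousOn_finset_sum
    intro l _
    exact ((hxc k).sub (hxc l)).inner ((hxc k).sub (hxc l))
  have hQnn : ∀ t, 0 ≤ Q t := fun t =>
    Finset.sum_nonneg fun k _ => Finset.sum_nonneg fun l _ => real_inner_self_nonneg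
  have hQτ : Q τ = 0 := by
    apply Finset.sum_eq_zero
    intro k hk
    apply Finset.sum_eq_zero
    intro l hl
    rw [(hmemA k).mp hk, (hmemA l).mp hl, sub_self, inner_zero_left]
  have hterm : ∀ t : ℝ, ∀ k ∈ A, ∀ l ∈ A, ‖x t k - x t l‖ ^ 2 ≤ Q t := by
    intro t k hk l hl
    have h1 : (⟪x t k - x t l, x t k - x t l⟫)
        ≤ ∑ m ∈ A, ⟪x t k - x t m, x t k - x t m⟫ :=
      Finset.single_le_sum (f := fun m => ⟪x t k - x t m, x t k - x t m⟫)
        (fun m _ => real_inner_self_nonneg) hl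
    have h2 : ∑ m ∈ A, ⟪x t k - x t m, x t k - x t m⟫ ≤ Q t :=
      Finset.single_le_sum
        (f := fun k => ∑ m ∈ A, ⟪x t k - x t m, x t k - x t m⟫)
        (fun k _ => Finset.sum_nonneg fun m _ => real_inner_self_nonneg) hk
    rw [← real_inner_self_eq_norm_sq]
    linarith only [h1, h2]
  have hQpos : ∀ t, 0 ≤ t → t < τ → 0 < Q t := by
    intro t ht htτ
    have hne := hpre t ht htτ i₀ j₀ hij₀
    have hne' : x t i₀ - x t j₀ ≠ 0 := sub_ne_zero.mpr hne
    have h1 : 0 < ‖x t i₀ - x t j₀‖ ^ 2 := pow_pos (norm_pos_iff.mpr hne') 2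
    exact lt_of_lt_of_le h1 (hterm t i₀ hi₀A j₀ hj₀A)
  clear_value Q
  -- constants
  set r₀ : ℝ := (1/4 : ℝ) ^ ((β - α)⁻¹) with hr₀def
  have hr₀pos : 0 < r₀ := Real.rpow_pos_of_pos (by norm_num) _
  have hr₀pow : r₀ ^ (β - α) = 1/4 := by
    rw [hr₀def, ← Real.rpow_mul (by norm_num), inv_mul_cancel₀ hβα.ne', Real.rpow_one]
  clear_value r₀
  have hNpos : (0:ℝ) < (N:ℝ) := by
    have : 0 < N := lt_of_lt_of_le two_pos hN
    exact_mod_cast this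
  set K : ℝ := 4 * (N:ℝ) * M₀ * a ^ 3 with hKdef
  have hKpos : 0 < K :=
    mul_pos (mul_pos (mul_pos (by norm_num) hNpos) hM₀pos) (pow_pos ha0 3)
  clear_value K
  set q₀ : ℝ := min r₀ ((1 / (K + 1)) ^ ((β - 1)⁻¹)) with hq₀def
  have hK1 : (0:ℝ) < K + 1 := by linarith only [hKpos]
  have hq₀pos : 0 < q₀ := lt_min hr₀pos (Real.rpow_pos_of_pos (div_pos one_pos hK1) _)
  have hq₀r₀ : q₀ ≤ r₀ := min_le_left _ _
  have hq₀min : q₀ ≤ (1 / (K + 1)) ^ ((β - 1)⁻¹) := min_le_right _ _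
  clear_value q₀
  have hq₀K : q₀ ^ (β - 1) ≤ 1 / (K + 1) := by
    calc q₀ ^ (β - 1) ≤ ((1 / (K + 1)) ^ ((β - 1)⁻¹)) ^ (β - 1) :=
          Real.rpow_le_rpow hq₀pos.le hq₀min (by linarith only [hβ1])
      _ = 1 / (K + 1) := by
          rw [← Real.rpow_mul (le_of_lt (div_pos one_pos hK1)),
            inv_mul_cancel₀ (sub_pos.mpr hβ1).ne', Real.rpow_one]
  -- the core derivative estimate
  have hcore : ∀ t : ℝ, τ - ε ≤ t → 0 < t → t < τ → 0 < Q t → Q t ≤ q₀ ^ 2 →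
      ∃ D : ℝ, HasDerivAt Q D t ∧ 0 < D := by
    intro t htε ht0 htτ hQt hQle
    have htIcc : t ∈ Set.Icc (τ - ε) τ := ⟨htε, htτ.le⟩
    have hdist := hpre t ht0.le htτ
    set V : Fin N → EuclideanSpace ℝ (Fin 2) := fun i =>
      (1 / ((N : ℝ) - 1)) • ∑ j ∈ Finset.univ.erase i, F t i j with hVdef
    have hx' : ∀ i : Fin N, HasDerivAt (fun s => x s i) (V i) t := by
      intro i
      have h := (hode i t ht0.le hdist).hasDerivAt (Ici_mem_nhds ht0)
      simp only [hVdef, hFdef]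
      exact h
    clear_value V
    set D : ℝ := ∑ k ∈ A, ∑ l ∈ A,
      ((⟪x t k - x t l, V k - V l⟫) + ⟪V k - V l, x t k - x t l⟫) with hDdef
    clear_value D
    have hQ' : HasDerivAt Q D t := by
      simp only [hQdef, hDdef]
      apply HasDerivAt.fun_sum
      intro k _
      apply HasDerivAt.fun_sum
      intro l _
      exact HasDerivAt.inner ℝ ((hx' k).sub (hx' l)) ((hx' k).sub (hx' l))
    have hD4 : D = 4 * ∑ k ∈ A, ∑ l ∈ A, ⟪x t k - x t l, V k⟫ := by
      have h1 : D = 2 * ∑ k ∈ A, ∑ l ∈ A, ⟪x t k - x t l, V k - V l⟫ := by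
        rw [hDdef, Finset.mul_sum]
        refine Finset.sum_congr rfl fun k _ => ?_
        rw [Finset.mul_sum]
        refine Finset.sum_congr rfl fun l _ => ?_
        rw [real_inner_comm (V k - V l) (x t k - x t l)]
        ring
      rw [h1, swarm_swap_sum]
      ring
    -- q and basic distance bounds
    set q : ℝ := Real.sqrt (Q t) with hqdef
    have hqpos : 0 < q := Real.sqrt_pos.mpr hQt
    clear_value q
    have hqq₀ : q ≤ q₀ := by
      rw [hqdef]
      calc Real.sqrt (Q t) ≤ Real.sqrt (q₀ ^ 2) := Real.sqrt_le_sqrt hQle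
        _ = q₀ := Real.sqrt_sq hq₀pos.le
    have hrq : ∀ k ∈ A, ∀ l ∈ A, ‖x t k - x t l‖ ≤ q := by
      intro k hk l hl
      rw [hqdef, ← Real.sqrt_sq (norm_nonneg (x t k - x t l))]
      exact Real.sqrt_le_sqrt (hterm t k hk l hl)
    have hr₀q : ∀ k ∈ A, ∀ j ∈ A, ‖x t j - x t k‖ ^ (β - α) ≤ 1 / 4 := by
      intro k hk j hj
      calc ‖x t j - x t k‖ ^ (β - α) ≤ r₀ ^ (β - α) :=
            Real.rpow_le_rpow (norm_nonneg _)
              (le_trans (hrq j hj k hk) (le_trans hqq₀ hq₀r₀)) hβα.le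
        _ = 1 / 4 := hr₀pow
    -- split the force sum
    have hsplit : ∀ k : Fin N, ∑ j ∈ Finset.univ.erase k, F t k j
        = (∑ j ∈ A, F t k j) + ∑ j ∈ Finset.univ \ A, F t k j := by
      intro k
      rw [Finset.sum_erase _ (hFdiag t k),
        ← Finset.sum_sdiff (Finset.subset_univ A), add_comm]
    set Pin : ℝ := ∑ k ∈ A, ∑ l ∈ A, ⟪x t k - x t l, ∑ j ∈ A, F t k j⟫ with hPindef
    set Pex : ℝ := ∑ k ∈ A, ∑ l ∈ A,
      ⟪x t k - x t l, ∑ j ∈ Finset.univ \ A, F t k j⟫ with hPexdef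
    clear_value Pin Pex
    have hPsum : ∑ k ∈ A, ∑ l ∈ A, ⟪x t k - x t l, V k⟫
        = (1 / ((N:ℝ) - 1)) * (Pin + Pex) := by
      rw [hPindef, hPexdef, ← Finset.sum_add_distrib, Finset.mul_sum]
      refine Finset.sum_congr rfl fun k hk => ?_
      rw [← Finset.sum_add_distrib, Finset.mul_sum]
      refine Finset.sum_congr rfl fun l hl => ?_
      simp only [hVdef]
      rw [real_inner_smul_right, hsplit k, inner_add_right]
    -- inner part
    have hPin_eq : Pin = a / 2 * ∑ k ∈ A, ∑ j ∈ A, ⟪x t k - x t j, F t k j⟫ := by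
      rw [hPindef, swarm_antisym_id A (fun k => x t k) (F t) (fun k j => hFanti t k j), ha]
    have hg_eq : ∀ k ∈ A, ∀ j ∈ A, k ≠ j → (⟪x t k - x t j, F t k j⟫)
        = ‖x t j - x t k‖ ^ (2 - β)
          - (1 + J * Real.cos (θ t j - θ t k)) * ‖x t j - x t k‖ ^ (2 - α) := by
      intro k hk j hj hkj
      have hw : x t j - x t k ≠ 0 := sub_ne_zero.mpr (hdist j k hkj.symm)
      have h := swarm_pair_inner (1 + J * Real.cos (θ t j - θ t k)) α β
        (x t j - x t k) hw
      rw [show x t k - x t j = -(x t j - x t k) by abel]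
      simp only [hFdef]
      exact h
    have hg_half : ∀ k ∈ A, ∀ j ∈ A, k ≠ j →
        (1 / 2) * ‖x t j - x t k‖ ^ (2 - β) ≤ ⟪x t k - x t j, F t k j⟫ := by
      intro k hk j hj hkj
      rw [hg_eq k hk j hj hkj]
      have hrpos : 0 < ‖x t j - x t k‖ :=
        norm_pos_iff.mpr (sub_ne_zero.mpr (hdist j k hkj.symm))
      exact swarm_pair_lower _ _ α β hrpos (hcle _) (hr₀q k hk j hj)
    have hg_nonneg : ∀ k ∈ A, ∀ j ∈ A, 0 ≤ ⟪x t k - x t j, F t k j⟫ := by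
      intro k hk j hj
      by_cases hkj : k = j
      · rw [hkj, sub_self, inner_zero_left]
      · have h1 := hg_half k hk j hj hkj
        have hrpos : 0 < ‖x t j - x t k‖ :=
          norm_pos_iff.mpr (sub_ne_zero.mpr (hdist j k (fun hh => hkj hh.symm)))
        have h2 : 0 < ‖x t j - x t k‖ ^ (2 - β) := Real.rpow_pos_of_pos hrpos _
        linarith only [h1, h2]
    -- maximal pair
    obtain ⟨p₁, hp₁mem, hp₁max⟩ := Finset.exists_max_image (A ×ˢ A)
      (fun p : Fin N × Fin N => ‖x t p.1 - x t p.2‖)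
      ⟨(i₀, i₀), Finset.mem_product.mpr ⟨hi₀A, hi₀A⟩⟩
    have hp₁A := Finset.mem_product.mp hp₁mem
    set rm : ℝ := ‖x t p₁.1 - x t p₁.2‖ with hrmdef
    clear_value rm
    have hQrm : Q t ≤ a ^ 2 * rm ^ 2 := by
      have hc1 : Q t ≤ ∑ k ∈ A, ∑ l ∈ A, rm ^ 2 := by
        simp only [hQdef]
        refine Finset.sum_le_sum fun k hk => Finset.sum_le_sum fun l hl => ?_
        rw [real_inner_self_eq_norm_sq]
        exact pow_le_pow_left₀ (norm_nonneg _)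
          (hp₁max (k, l) (Finset.mem_product.mpr ⟨hk, hl⟩)) 2
      have hc2 : ∑ k ∈ A, ∑ l ∈ A, rm ^ 2 = a ^ 2 * rm ^ 2 := by
        simp only [Finset.sum_const, nsmul_eq_mul, ha]
        ring
      linarith only [hc1, hc2]
    have hrmnn : 0 ≤ rm := by rw [hrmdef]; exact norm_nonneg _
    have hrmpos : 0 < rm := by
      rcases eq_or_lt_of_le hrmnn with h | h
      · exfalso
        have h2 : a ^ 2 * rm ^ 2 = 0 := by rw [← h]; ring
        rw [h2] at hQrm
        linarith only [hQrm, hQt]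
      · exact h
    have hp₁ne : p₁.1 ≠ p₁.2 := by
      intro h
      rw [hrmdef, h, sub_self, norm_zero] at hrmpos
      exact lt_irrefl 0 hrmpos
    have hrmq : rm ≤ q := by rw [hrmdef]; exact hrq p₁.1 hp₁A.1 p₁.2 hp₁A.2
    have hqarm : q ≤ a * rm := by
      have h1 : Real.sqrt (Q t) ≤ Real.sqrt ((a * rm) ^ 2) :=
        Real.sqrt_le_sqrt (by rw [mul_pow]; exact hQrm)
      rwa [Real.sqrt_sq (mul_nonneg ha0.le hrmpos.le), ← hqdef] at h1
    have hrm_lb : q ^ (2 - β) / a ^ 2 ≤ rm ^ (2 - β) := by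
      have e1 : rm ^ ((2:ℝ) - β) = rm ^ (2:ℝ) * rm ^ (-β) := by
        rw [← Real.rpow_add hrmpos]; ring_nf
      have e2 : q ^ ((2:ℝ) - β) = q ^ (2:ℝ) * q ^ (-β) := by
        rw [← Real.rpow_add hqpos]; ring_nf
      have h1 : (q / a) ^ ((2:ℝ)) ≤ rm ^ ((2:ℝ)) :=
        Real.rpow_le_rpow (div_nonneg hqpos.le ha0.le)
          (by rw [div_le_iff₀ ha0]; linarith only [hqarm]) (by norm_num)
      have h2 : q ^ (-β) ≤ rm ^ (-β) :=
        Real.rpow_le_rpow_of_nonpos hrmpos hrmq (by linarith only [hβ1])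
      have h3 : (q / a) ^ ((2:ℝ)) * q ^ (-β) ≤ rm ^ ((2:ℝ)) * rm ^ (-β) :=
        mul_le_mul h1 h2 (Real.rpow_nonneg hqpos.le _) (Real.rpow_nonneg hrmpos.le _)
      have h4 : (q / a) ^ ((2:ℝ)) = q ^ ((2:ℝ)) / a ^ ((2:ℝ)) :=
        Real.div_rpow hqpos.le ha0.le _
      have h5 : a ^ ((2:ℝ)) = a ^ (2:ℕ) := Real.rpow_two a
      rw [e1.symm] at h3
      rw [h4, h5] at h3
      calc q ^ ((2:ℝ) - β) / a ^ (2:ℕ) = q ^ ((2:ℝ)) * q ^ (-β) / a ^ (2:ℕ) := by rw [e2]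
        _ = q ^ ((2:ℝ)) / a ^ (2:ℕ) * q ^ (-β) := by ring
        _ ≤ rm ^ ((2:ℝ) - β) := h3
    have hSg : q ^ (2 - β) / (2 * a ^ 2)
        ≤ ∑ k ∈ A, ∑ j ∈ A, ⟪x t k - x t j, F t k j⟫ := by
      have hsingle : (1 / 2) * rm ^ (2 - β) ≤ ⟪x t p₁.1 - x t p₁.2, F t p₁.1 p₁.2⟫ := by
        have h := hg_half p₁.1 hp₁A.1 p₁.2 hp₁A.2 hp₁ne
        rwa [norm_sub_rev, ← hrmdef] at h
      have hsum1 : (⟪x t p₁.1 - x t p₁.2, F t p₁.1 p₁.2⟫)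
          ≤ ∑ k ∈ A, ∑ j ∈ A, ⟪x t k - x t j, F t k j⟫ := by
        have hrow : (⟪x t p₁.1 - x t p₁.2, F t p₁.1 p₁.2⟫)
            ≤ ∑ j ∈ A, ⟪x t p₁.1 - x t j, F t p₁.1 j⟫ :=
          Finset.single_le_sum (f := fun j => ⟪x t p₁.1 - x t j, F t p₁.1 j⟫)
            (fun j hj => hg_nonneg p₁.1 hp₁A.1 j hj) hp₁A.2
        have hall : ∑ j ∈ A, (⟪x t p₁.1 - x t j, F t p₁.1 j⟫)
            ≤ ∑ k ∈ A, ∑ j ∈ A, ⟪x t k - x t j, F t k j⟫ :=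
          Finset.single_le_sum (f := fun k => ∑ j ∈ A, ⟪x t k - x t j, F t k j⟫)
            (fun k hk => Finset.sum_nonneg fun j hj => hg_nonneg k hk j hj) hp₁A.1
        linarith only [hrow, hall]
      have : q ^ (2 - β) / (2 * a ^ 2) ≤ (1 / 2) * rm ^ (2 - β) := by
        calc q ^ (2 - β) / (2 * a ^ 2) = (1 / 2) * (q ^ (2 - β) / a ^ 2) := by ring
          _ ≤ (1 / 2) * rm ^ (2 - β) := by linarith only [hrm_lb]
      linarith only [hsingle, hsum1, this]
    have hPin_lb : q ^ (2 - β) / (4 * a) ≤ Pin := by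
      rw [hPin_eq]
      have h1 : a / 2 * (q ^ (2 - β) / (2 * a ^ 2))
          ≤ a / 2 * ∑ k ∈ A, ∑ j ∈ A, ⟪x t k - x t j, F t k j⟫ :=
        mul_le_mul_of_nonneg_left hSg (by linarith only [ha0] : (0:ℝ) ≤ a / 2)
      have h2 : a / 2 * (q ^ (2 - β) / (2 * a ^ 2)) = q ^ (2 - β) / (4 * a) := by
        field_simp
        ring
      linarith only [h1, h2]
    -- external part
    have hPex_lb : -(a ^ 2 * (N:ℝ) * M₀ * q) ≤ Pex := by
      have hbd : ∀ k ∈ A, ∀ l ∈ A,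
          -((N:ℝ) * M₀ * q) ≤ ⟪x t k - x t l, ∑ j ∈ Finset.univ \ A, F t k j⟫ := by
        intro k hk l hl
        have hnormsum : ‖∑ j ∈ Finset.univ \ A, F t k j‖ ≤ (N:ℝ) * M₀ := by
          calc ‖∑ j ∈ Finset.univ \ A, F t k j‖ ≤ ∑ j ∈ Finset.univ \ A, ‖F t k j‖ :=
                norm_sum_le _ _
            _ ≤ ∑ j ∈ Finset.univ \ A, M₀ :=
                Finset.sum_le_sum fun j hj => hFle t htIcc k hk j hj
            _ = ((Finset.univ \ A).card : ℝ) * M₀ := by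
                rw [Finset.sum_const, nsmul_eq_mul]
            _ ≤ (N:ℝ) * M₀ := by
                apply mul_le_mul_of_nonneg_right _ hM₀pos.le
                have h3 : (Finset.univ \ A).card ≤ N := by
                  simpa using Finset.card_le_univ (Finset.univ \ A)
                exact_mod_cast h3
        have habs : |(⟪x t k - x t l, ∑ j ∈ Finset.univ \ A, F t k j⟫ : ℝ)|
            ≤ q * ((N:ℝ) * M₀) := by
          calc |(⟪x t k - x t l, ∑ j ∈ Finset.univ \ A, F t k j⟫ : ℝ)|
              ≤ ‖x t k - x t l‖ * ‖∑ j ∈ Finset.univ \ A, F t k j‖ :=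
                abs_real_inner_le_norm _ _
            _ ≤ q * ((N:ℝ) * M₀) :=
                mul_le_mul (hrq k hk l hl) hnormsum (norm_nonneg _) hqpos.le
        have h2 := (abs_le.mp habs).1
        ring_nf at h2 ⊢
        linarith only [h2]
      have hsum : ∑ k ∈ A, ∑ l ∈ A, (-((N:ℝ) * M₀ * q)) ≤ Pex := by
        rw [hPexdef]
        exact Finset.sum_le_sum fun k hk => Finset.sum_le_sum fun l hl => hbd k hk l hl
      have hconst : ∑ k ∈ A, ∑ l ∈ A, (-((N:ℝ) * M₀ * q)) = -(a ^ 2 * (N:ℝ) * M₀ * q) := by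
        simp only [Finset.sum_const, nsmul_eq_mul, ha]
        ring
      linarith only [hsum, hconst]
    -- conclude
    refine ⟨D, hQ', ?_⟩
    have hfin : 0 < Pin + Pex := by
      have hz : q ^ (β - 1) * q ^ (2 - β) = q := by
        rw [← Real.rpow_add hqpos]
        norm_num
      have hzle : q ^ (β - 1) ≤ 1 / (K + 1) :=
        le_trans (Real.rpow_le_rpow hqpos.le hqq₀ (by linarith only [hβ1])) hq₀K
      have hwpos : 0 < q ^ (2 - β) := Real.rpow_pos_of_pos hqpos _
      have hmain : a ^ 2 * (N:ℝ) * M₀ * q < q ^ (2 - β) / (4 * a) := by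
        have e : a ^ 2 * (N:ℝ) * M₀ * q
            = (a ^ 2 * (N:ℝ) * M₀ * q ^ (β - 1)) * q ^ (2 - β) := by
          rw [mul_assoc (a ^ 2 * (N:ℝ) * M₀), hz]
        have h1 : a ^ 2 * (N:ℝ) * M₀ * q ^ (β - 1) ≤ a ^ 2 * (N:ℝ) * M₀ * (1 / (K + 1)) :=
          mul_le_mul_of_nonneg_left hzle
            (mul_nonneg (mul_nonneg (pow_nonneg ha0.le 2) hNpos.le) hM₀pos.le)
        have hK1 : (0:ℝ) < K + 1 := by linarith only [hKpos]
        have h2 : a ^ 2 * (N:ℝ) * M₀ * (1 / (K + 1)) < 1 / (4 * a) := by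
          rw [mul_one_div, div_lt_div_iff₀ hK1 (by linarith only [ha0] : (0:ℝ) < 4 * a), hKdef]
          ring_nf
          linarith only []
        have h3 : (a ^ 2 * (N:ℝ) * M₀ * q ^ (β - 1)) * q ^ (2 - β)
            < (1 / (4 * a)) * q ^ (2 - β) := by
          apply mul_lt_mul_of_pos_right _ hwpos
          exact lt_of_le_of_lt h1 h2
        rw [e]
        calc (a ^ 2 * (N:ℝ) * M₀ * q ^ (β - 1)) * q ^ (2 - β)
            < (1 / (4 * a)) * q ^ (2 - β) := h3
          _ = q ^ (2 - β) / (4 * a) := by ring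
      linarith only [hPin_lb, hPex_lb, hmain]
    rw [hD4, hPsum]
    apply mul_pos (by norm_num)
    exact mul_pos (div_pos one_pos hN1) hfin
  -- endgame: pick s close to τ
  have hQca : ContinuousAt Q τ := hQc.continuousAt (Ici_mem_nhds hτpos)
  have hev : ∀ᶠ u in nhds τ, Q u < q₀ ^ 2 := by
    have h : Q τ < q₀ ^ 2 := by rw [hQτ]; exact pow_pos hq₀pos 2
    exact Filter.Tendsto.eventually_lt_const h hQca
  obtain ⟨δ₁, hδ₁pos, hδ₁⟩ := Metric.eventually_nhds_iff.mp hev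
  set m : ℝ := min (min ε δ₁) τ with hmdef
  have hmpos : 0 < m := lt_min (lt_min hεpos hδ₁pos) hτpos
  have hmε : m ≤ ε := le_trans (min_le_left _ _) (min_le_left _ _)
  have hmδ : m ≤ δ₁ := le_trans (min_le_left _ _) (min_le_right _ _)
  have hmτ : m ≤ τ := min_le_right _ _
  clear_value m
  set s : ℝ := τ - m / 2 with hsdef
  clear_value s
  have hs0 : 0 < s := by rw [hsdef]; linarith only [hmpos, hmτ]
  have hsτ : s < τ := by rw [hsdef]; linarith only [hmpos]
  have hsε : τ - ε ≤ s := by rw [hsdef]; linarith only [hmε, hmpos]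
  have hQs_lt : Q s < q₀ ^ 2 := by
    apply hδ₁
    rw [Real.dist_eq, hsdef, show τ - m / 2 - τ = -(m / 2) by ring, abs_neg,
      abs_of_pos (by linarith only [hmpos])]
    linarith only [hmδ, hmpos]
  have hQs_pos : 0 < Q s := hQpos s hs0.le hsτ
  set B : ℝ := Q s with hBdef
  clear_value B
  have hBpos : 0 < B := hQs_pos
  have hBlt : B < q₀ ^ 2 := hQs_lt
  -- u := first time after s where Q ≤ B/2
  set U : Set ℝ := Set.Icc s τ ∩ Q ⁻¹' Set.Iic (B / 2) with hUdef
  have hUclosed : IsClosed U :=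
    (hQc.mono fun z hz => le_trans hs0.le hz.1).preimage_isClosed_of_isClosed
      isClosed_Icc isClosed_Iic
  have hUne : U.Nonempty := ⟨τ, ⟨hsτ.le, le_refl τ⟩, by
    simp only [Set.mem_preimage, Set.mem_Iic, hQτ]; linarith only [hBpos]⟩
  have hUbdd : BddBelow U := ⟨s, fun z hz => hz.1.1⟩
  set u : ℝ := sInf U with hudef
  have huU : u ∈ U := hUclosed.csInf_mem hUne hUbdd
  have huQ : Q u ≤ B / 2 := huU.2
  have hsu : s < u := by
    rcases eq_or_lt_of_le huU.1.1 with h | h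
    · exfalso; rw [← h, ← hBdef] at huQ; linarith only [huQ, hBpos]
    · exact h
  have huτ : u ≤ τ := huU.1.2
  have hQgt : ∀ z, s ≤ z → z < u → B / 2 < Q z := by
    intro z hsz hzu
    by_contra hle
    push_neg at hle
    have hzU : z ∈ U := ⟨⟨hsz, le_trans hzu.le huτ⟩, hle⟩
    exact absurd (csInf_le hUbdd hzU) (not_le.mpr hzu)
  -- v := last time before u where Q ≥ B
  set Vs : Set ℝ := Set.Icc s u ∩ Q ⁻¹' Set.Ici B with hVsdef
  have hVclosed : IsClosed Vs :=
    (hQc.mono fun z hz => le_trans hs0.le hz.1).preimage_isClosed_of_isClosed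
      isClosed_Icc isClosed_Ici
  have hVne : Vs.Nonempty := ⟨s, ⟨le_refl s, hsu.le⟩, by
    simp only [Set.mem_preimage, Set.mem_Ici]
    exact le_of_eq hBdef⟩
  have hVbdd : BddAbove Vs := ⟨u, fun z hz => hz.1.2⟩
  set v : ℝ := sSup Vs with hvdef
  have hvV : v ∈ Vs := hVclosed.csSup_mem hVne hVbdd
  have hvQ : B ≤ Q v := hvV.2
  have hsv : s ≤ v := hvV.1.1
  have hvu : v < u := by
    rcases eq_or_lt_of_le hvV.1.2 with h | h
    · exfalso; rw [h] at hvQ; linarith only [hvQ, huQ, hBpos]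
    · exact h
  have hQltB : ∀ z, v < z → z ≤ u → Q z < B := by
    intro z hvz hzu
    by_contra hle
    push_neg at hle
    have hzV : z ∈ Vs := ⟨⟨le_trans hsv hvz.le, hzu⟩, hle⟩
    exact absurd (le_csSup hVbdd hzV) (not_le.mpr hvz)
  -- strict monotonicity on [v, u]
  have hmono : StrictMonoOn Q (Set.Icc v u) := by
    apply strictMonoOn_of_deriv_pos (convex_Icc v u)
    · exact hQc.mono fun z hz => le_trans (le_trans hs0.le hsv) hz.1
    · intro z hz
      rw [interior_Icc] at hz
      have hz1 : s ≤ z := le_trans hsv hz.1.le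
      have hz2 : z < u := hz.2
      have hc1 : τ - ε ≤ z := le_trans hsε hz1
      have hc2 : 0 < z := lt_of_lt_of_le hs0 hz1
      have hc3 : z < τ := lt_of_lt_of_le hz2 huτ
      have hc4 : 0 < Q z := by have := hQgt z hz1 hz2; linarith only [this, hBpos]
      have hc5 : Q z ≤ q₀ ^ 2 := by
        have h1 := hQltB z hz.1 hz2.le
        linarith only [h1, hBlt]
      obtain ⟨D, hD', hDpos⟩ := hcore z hc1 hc2 hc3 hc4 hc5
      rwa [hD'.deriv]
  have hfinal := hmono (Set.left_mem_Icc.mpr hvu.le) (Set.right_mem_Icc.mpr hvu.le) hvu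
  linarith only [hfinal, hvQ, huQ, hBpos]
end

section
/- Root-of-unity identity IV: for every integer N ≥ 2, with u = exp(2πi/N) ∈ ℂ, the complex sum ∑_{m=1}^{N−1} (u^m + u^{−m})(1 − u^m)/|1 − u^m| equals the real number sin(3π/N)/(1 − cos(3π/N)) − sin(π/N)/(1 − cos(π/N)), where |·| denotes the complex modulus. -/
open Complex Finset

/-- Key algebraic identity: `-I * (-1 - e^{ix})/(e^{ix} - 1) = sin x / (1 - cos x)`. -/
lemma aux_cot (x : ℝ) (hx : Real.cos x ≠ 1) :
    -Complex.I * ((-1 - Complex.exp ((x : ℂ) * Complex.I)) / (Complex.exp ((x : ℂ) * Complex.I) - 1))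
      = ((Real.sin x / (1 - Real.cos x) : ℝ) : ℂ) := by
  have hden2 : (1 : ℝ) - Real.cos x ≠ 0 := fun h => hx (by linarith)
  rw [Complex.exp_mul_I, ← Complex.ofReal_cos, ← Complex.ofReal_sin]
  have hden : (Real.cos x : ℂ) + (Real.sin x : ℂ) * Complex.I - 1 ≠ 0 := by
    intro h
    apply hx
    have h1 : Real.cos x - 1 = 0 := by
      have := congrArg Complex.re h
      simpa [Complex.cos_ofReal_re] using this
    linarith
  have pyth : (Real.sin x : ℂ) ^ 2 + (Real.cos x : ℂ) ^ 2 = 1 := by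
    exact_mod_cast Real.sin_sq_add_cos_sq x
  have hden2' : ((1 : ℂ)) - (Real.cos x : ℂ) ≠ 0 := by
    exact_mod_cast hden2
  rw [Complex.ofReal_div, Complex.ofReal_sub, Complex.ofReal_one]
  rw [mul_div_assoc', div_eq_div_iff hden hden2']
  linear_combination (-Complex.I) * pyth
    + ((Real.sin x : ℂ) * (1 - (Real.cos x : ℂ))) * Complex.I_sq

lemma aux_alg (w S : ℂ) (hw : w ≠ 0) (hS : S ≠ 0) :
    (w ^ 2 + (w ^ 2)⁻¹) * (-2 * Complex.I * S * w) / (2 * S)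
      = -Complex.I * (w ^ 3 + w⁻¹) := by
  field_simp

/-- Root-of-unity identity IV: with `u = exp(2πi/N)`,
`∑_{m=1}^{N−1} (u^m + u^{−m})(1 − u^m)/|1 − u^m|
  = sin(3π/N)/(1 − cos(3π/N)) − sin(π/N)/(1 − cos(π/N))`. -/
theorem root_of_unity_sum_unit_weighted (N : ℕ) (hN : 2 ≤ N)
    (u : ℂ) (hu : u = Complex.exp (2 * (Real.pi : ℂ) * Complex.I / (N : ℂ))) :
    ∑ m ∈ Finset.Ico 1 N,
      (u ^ (m : ℤ) + u ^ (-(m : ℤ))) * (1 - u ^ m) / ((‖1 - u ^ m‖ : ℝ) : ℂ)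
      = ((Real.sin (3 * Real.pi / N) / (1 - Real.cos (3 * Real.pi / N))
          - Real.sin (Real.pi / N) / (1 - Real.cos (Real.pi / N)) : ℝ) : ℂ) := by
  have hNR : (0:ℝ) < N := by positivity
  have hN0 : (N : ℂ) ≠ 0 := Nat.cast_ne_zero.mpr (by omega)
  have hπ : Real.pi ≠ 0 := Real.pi_ne_zero
  have hπI : (Real.pi : ℂ) * Complex.I ≠ 0 :=
    mul_ne_zero (Complex.ofReal_ne_zero.mpr hπ) Complex.I_ne_zero
  set v : ℂ := Complex.exp ((Real.pi : ℂ) * Complex.I / N) with hv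
  have hv0 : v ≠ 0 := Complex.exp_ne_zero _
  have hvpow : ∀ k : ℕ, v ^ k = Complex.exp ((k : ℂ) * Real.pi * Complex.I / N) := by
    intro k
    rw [hv, ← Complex.exp_nat_mul]
    ring_nf
  have hvN : v ^ N = -1 := by
    rw [hvpow, show ((N : ℂ)) * Real.pi * Complex.I / N = Real.pi * Complex.I by
      field_simp]
    exact Complex.exp_pi_mul_I
  have hu2 : u = v ^ 2 := by
    rw [hu, hvpow]; norm_num
  have hv1 : v ≠ 1 := by
    intro h
    rw [hv, Complex.exp_eq_one_iff] at h
    obtain ⟨n, hn⟩ := h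
    field_simp at hn
    have h2 : (Real.pi : ℂ) * Complex.I * 1 = (Real.pi : ℂ) * Complex.I * (2 * n * N) := by
      linear_combination (↑Real.pi * Complex.I) * hn
    have h3 := mul_left_cancel₀ hπI h2
    have h4 : (1 : ℤ) = 2 * n * N := by exact_mod_cast h3
    have : (2:ℤ) ∣ 1 := ⟨n * N, by linarith⟩
    norm_num at this
  have hv3 : v ^ 3 ≠ 1 := by
    intro h
    rw [hvpow, Complex.exp_eq_one_iff] at h
    obtain ⟨n, hn⟩ := h
    field_simp at hn
    have h2 : (Real.pi : ℂ) * Complex.I * 3 = (Real.pi : ℂ) * Complex.I * (2 * n * N) := by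
      linear_combination (↑Real.pi * Complex.I) * hn
    have h3 := mul_left_cancel₀ hπI h2
    have h4 : (3 : ℤ) = 2 * n * N := by exact_mod_cast h3
    have : (2:ℤ) ∣ 3 := ⟨n * N, by linarith⟩
    norm_num at this
  have hvinv : v⁻¹ ≠ 1 := fun h => hv1 (inv_eq_one.mp h)
  -- rewrite each term
  have hterm : ∀ m ∈ Finset.Ico 1 N,
      (u ^ (m : ℤ) + u ^ (-(m : ℤ))) * (1 - u ^ m) / ((‖1 - u ^ m‖ : ℝ) : ℂ)
      = -Complex.I * ((v ^ 3) ^ m + (v⁻¹) ^ m) := by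
    intro m hm
    rw [Finset.mem_Ico] at hm
    have hmR : (0:ℝ) < m := by exact_mod_cast hm.1
    set s : ℝ := Real.pi * m / N with hs
    have hs0 : 0 < s := by rw [hs]; positivity
    have hsπ : s < Real.pi := by
      rw [hs, div_lt_iff₀ hNR]
      have : (m : ℝ) < N := by exact_mod_cast hm.2
      nlinarith [Real.pi_pos]
    have hsin : 0 < Real.sin s := Real.sin_pos_of_pos_of_lt_pi hs0 hsπ
    have hw : v ^ m = Complex.exp ((s : ℂ) * Complex.I) := by
      rw [hvpow]
      congr 1
      rw [hs]
      push_cast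
      ring
    set w : ℂ := v ^ m with hwdef
    have hw0 : w ≠ 0 := pow_ne_zero _ hv0
    have habsw : ‖w‖ = 1 := by
      rw [hw]; exact_mod_cast Complex.norm_exp_ofReal_mul_I s
    have h1 : 1 - w ^ 2 = -2 * Complex.I * (Real.sin s : ℂ) * w := by
      rw [hw, Complex.exp_mul_I, ← Complex.ofReal_cos, ← Complex.ofReal_sin]
      have pyth : (Real.sin s : ℂ) ^ 2 + (Real.cos s : ℂ) ^ 2 = 1 := by
        exact_mod_cast Real.sin_sq_add_cos_sq s
      linear_combination (-1 : ℂ) * pyth + ((Real.sin s : ℂ))^2 * Complex.I_sq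
    have hum : u ^ m = w ^ 2 := by
      rw [hu2, hwdef, pow_right_comm]
    have habs : ‖1 - u ^ m‖ = 2 * Real.sin s := by
      rw [hum, h1, norm_mul, norm_mul, norm_mul, habsw, Complex.norm_real, Real.norm_eq_abs,
        abs_of_pos hsin, norm_neg, Complex.norm_two, Complex.norm_I]
      ring
    rw [habs, hum]
    rw [show u ^ (m : ℤ) = w ^ 2 by rw [zpow_natCast, hum]]
    rw [show u ^ (-(m : ℤ)) = (w ^ 2)⁻¹ by rw [zpow_neg, zpow_natCast, hum]]
    rw [h1]
    rw [show (v ^ 3) ^ m = w ^ 3 by rw [hwdef, pow_right_comm],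
        show (v⁻¹) ^ m = w⁻¹ by rw [hwdef, inv_pow]]
    have hsinC : ((Real.sin s : ℝ) : ℂ) ≠ 0 := by
      exact_mod_cast ne_of_gt hsin
    rw [Complex.ofReal_mul, Complex.ofReal_ofNat]
    exact aux_alg w _ hw0 hsinC
  rw [Finset.sum_congr rfl hterm]
  rw [← Finset.mul_sum, Finset.sum_add_distrib]
  rw [geom_sum_Ico hv3 (by omega), geom_sum_Ico hvinv (by omega)]
  have h3N : (v ^ 3) ^ N = -1 := by rw [pow_right_comm, hvN]; ring
  have hiN : (v⁻¹) ^ N = -1 := by rw [inv_pow, hvN]; norm_num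
  rw [h3N, hiN, pow_one, pow_one]
  have hv3e : v ^ 3 = Complex.exp (((3 * Real.pi / N : ℝ) : ℂ) * Complex.I) := by
    rw [hvpow]; congr 1; push_cast; ring
  have hvie : v⁻¹ = Complex.exp (((-(Real.pi / N) : ℝ) : ℂ) * Complex.I) := by
    rw [hv, ← Complex.exp_neg]; congr 1; push_cast; ring
  have hN0R : (N : ℝ) ≠ 0 := ne_of_gt hNR
  have hcos3 : Real.cos (3 * Real.pi / N) ≠ 1 := by
    intro h
    rw [Real.cos_eq_one_iff] at h
    obtain ⟨n, hn⟩ := h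
    field_simp at hn
    have h2 : Real.pi * (2 * n * N) = Real.pi * 3 := by linear_combination Real.pi * hn
    have h3 := mul_left_cancel₀ hπ h2
    have h4 : 2 * n * N = (3 : ℤ) := by exact_mod_cast h3
    have : (2:ℤ) ∣ 3 := ⟨n * N, by linarith⟩
    norm_num at this
  have hcos1 : Real.cos (-(Real.pi / N)) ≠ 1 := by
    rw [Real.cos_neg]
    intro h
    rw [Real.cos_eq_one_iff] at h
    obtain ⟨n, hn⟩ := h
    field_simp at hn
    have h2 : Real.pi * (2 * n * N) = Real.pi * 1 := by linear_combination Real.pi * hn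
    have h3 := mul_left_cancel₀ hπ h2
    have h4 : 2 * n * N = (1 : ℤ) := by exact_mod_cast h3
    have : (2:ℤ) ∣ 1 := ⟨n * N, by linarith⟩
    norm_num at this
  have e1 := aux_cot (3 * Real.pi / N) hcos3
  have e2 := aux_cot (-(Real.pi / N)) hcos1
  rw [hv3e, hvie, mul_add, e1, e2]
  rw [Real.sin_neg, Real.cos_neg]
  push_cast
  ring
end

section
/- The ring phase wave configuration is stationary for the repulsive phase dynamics for every radius: let N ≥ 2, u = exp(2πi/N) ∈ ℂ, R > 0, C ∈ ℝ, z_k = R·u^k and θ_k = 2πk/N + C. Then for every index k, ∑_{j≠k} sin(θ_j − θ_k)/|z_j − z_k| = 0. -/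
open Real Finset
open Fin.NatCast

lemma cos_sum_zero (N : ℕ) (hN : 2 ≤ N) :
    ∑ d ∈ Finset.Ico 1 N, Real.cos (π * d / N) = 0 := by
  have hN0 : (N : ℝ) ≠ 0 := by positivity
  refine Finset.sum_involution (fun d _ => N - d) ?_ ?_ ?_ ?_
  · intro d hd
    simp only [Finset.mem_Ico] at hd
    have h1 : ((N - d : ℕ) : ℝ) = (N : ℝ) - d := by
      push_cast [Nat.cast_sub (by omega : d ≤ N)]; ring
    have h2 : π * ((N : ℝ) - d) / N = π - π * d / N := by field_simp
    rw [h1, h2, Real.cos_pi_sub]; ring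
  · intro d hd hne
    simp only [Finset.mem_Ico] at hd
    intro h
    have h2 : 2 * d = N := by omega
    apply hne
    have : π * d / N = π / 2 := by
      have hd0 : (d:ℝ) ≠ 0 := Nat.cast_ne_zero.mpr (by omega)
      rw [← h2]; push_cast; field_simp
    rw [this, Real.cos_pi_div_two]
  · intro d hd
    simp only [Finset.mem_Ico] at hd ⊢
    omega
  · intro d hd
    simp only [Finset.mem_Ico] at hd
    show N - (N - d) = d
    omega

/-- The ring phase wave configuration `z_k = R u^k`, `θ_k = 2πk/N + C` is stationary
for the repulsive phase dynamics `θ̇_k = (ε_r/(N−1)) ∑_{j≠k} sin(θ_j−θ_k)/|z_j−z_k|`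
for every radius: the sum `∑_{j≠k} sin(θ_j−θ_k)/|z_j−z_k|` vanishes for every k. -/
theorem ring_phase_wave_phase_stationary (N : ℕ) (hN : 2 ≤ N) (R C : ℝ) (hR : 0 < R)
    (u : ℂ) (hu : u = Complex.exp (2 * (Real.pi : ℂ) * Complex.I / (N : ℂ)))
    (z : Fin N → ℂ) (hz : ∀ k : Fin N, z k = (R : ℂ) * u ^ ((k : ℕ) + 1))
    (θ : Fin N → ℝ) (hθ : ∀ k : Fin N, θ k = 2 * Real.pi * ((k : ℕ) + 1) / N + C) :
    ∀ k : Fin N, ∑ j ∈ Finset.univ.erase k,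
      Real.sin (θ j - θ k) / ‖z j - z k‖ = 0 := by
  intro k
  haveI : NeZero N := ⟨by omega⟩
  have hNpos : 0 < N := by omega
  have hN0 : (N : ℝ) ≠ 0 := Nat.cast_ne_zero.mpr (by omega)
  have hN0c : (N : ℂ) ≠ 0 := Nat.cast_ne_zero.mpr (by omega)
  -- basic facts about u
  have hu' : ∀ m : ℕ, u ^ m = Complex.exp ((2 * π * m / N : ℝ) * Complex.I) := by
    intro m
    rw [hu, ← Complex.exp_nat_mul]
    congr 1
    push_cast
    field_simp
  have huN : u ^ N = 1 := by
    rw [hu' N]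
    have : ((2 * π * N / N : ℝ) : ℂ) * Complex.I = 2 * π * Complex.I := by
      rw [mul_div_assoc, div_self hN0]; push_cast; ring
    rw [this, Complex.exp_two_pi_mul_I]
  -- each term equals cos(π d / N) / R where d = (j - k).val
  have key : ∀ j : Fin N, j ≠ k →
      Real.sin (θ j - θ k) / ‖z j - z k‖
        = Real.cos (π * ((j - k : Fin N) : ℕ) / N) / R := by
    intro j hjk
    set d : ℕ := ((j - k : Fin N) : ℕ) with hd
    have hdlt : d < N := (j - k).isLt
    have hdpos : 0 < d := by
      rcases Nat.eq_zero_or_pos d with h | h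
      · exact absurd (sub_eq_zero.mp (Fin.ext h : j - k = 0)) hjk
      · exact h
    have hdval : d = ((j : ℕ) + (N - (k : ℕ))) % N := by
      rw [hd, Fin.sub_def]
      simp [Nat.add_comm]
    have hcase : (j : ℕ) + N = (k : ℕ) + d ∨ (j : ℕ) = (k : ℕ) + d := by
      rcases le_or_gt (k : ℕ) (j : ℕ) with h | h
      · right
        have e1 : (j : ℕ) + (N - (k : ℕ)) = ((j : ℕ) - (k : ℕ)) + N := by omega
        rw [e1, Nat.add_mod_right, Nat.mod_eq_of_lt (by omega)] at hdval
        omega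
      · left
        rw [Nat.mod_eq_of_lt (by omega)] at hdval
        omega
    -- the power identity
    have hpow : u ^ ((j : ℕ) + 1) = u ^ ((k : ℕ) + 1) * u ^ d := by
      rcases hcase with h | h
      · have : ((k : ℕ) + 1) + d = ((j : ℕ) + 1) + N := by omega
        calc u ^ ((j : ℕ) + 1) = u ^ ((j : ℕ) + 1) * u ^ N := by rw [huN, mul_one]
          _ = u ^ (((j : ℕ) + 1) + N) := (pow_add u _ N).symm
          _ = u ^ (((k : ℕ) + 1) + d) := by rw [this]
          _ = u ^ ((k : ℕ) + 1) * u ^ d := pow_add u _ d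
      · have : (j : ℕ) + 1 = ((k : ℕ) + 1) + d := by omega
        rw [this, pow_add]
    -- the sine
    have hsin : Real.sin (θ j - θ k) = Real.sin (2 * π * d / N) := by
      rw [hθ, hθ]
      rcases hcase with h | h
      · have h' : ((j : ℕ) : ℝ) + N = ((k : ℕ) : ℝ) + d := by exact_mod_cast h
        have harg : 2 * π * ((j : ℕ) + 1) / N + C - (2 * π * ((k : ℕ) + 1) / N + C)
            = 2 * π * d / N - 2 * π := by
          field_simp
          linear_combination (2 * π) * h'
        rw [harg, Real.sin_sub_two_pi]
      · have h' : ((j : ℕ) : ℝ) = ((k : ℕ) : ℝ) + d := by exact_mod_cast h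
        have harg : 2 * π * ((j : ℕ) + 1) / N + C - (2 * π * ((k : ℕ) + 1) / N + C)
            = 2 * π * d / N := by
          field_simp
          linear_combination (2 * π) * h'
        rw [harg]
    -- the modulus
    have hsinpos : 0 < Real.sin (π * d / N) := by
      apply Real.sin_pos_of_pos_of_lt_pi
      · positivity
      · rw [div_lt_iff₀ (by positivity)]
        have : (d : ℝ) < N := by exact_mod_cast hdlt
        nlinarith [Real.pi_pos]
    have habs : ‖z j - z k‖ = R * (2 * Real.sin (π * d / N)) := by
      rw [hz, hz, hpow]
      have e1 : (R : ℂ) * (u ^ ((k : ℕ) + 1) * u ^ d) - (R : ℂ) * u ^ ((k : ℕ) + 1)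
          = (R : ℂ) * u ^ ((k : ℕ) + 1) * (u ^ d - 1) := by ring
      rw [e1, norm_mul, norm_mul, Complex.norm_real, Real.norm_eq_abs, abs_of_pos hR]
      have habsu : ‖u ^ ((k : ℕ) + 1)‖ = 1 := by
        rw [hu']; exact Complex.norm_exp_ofReal_mul_I _
      rw [habsu, mul_one]
      set ψ : ℝ := π * d / N with hψ
      have hexp1 : Complex.exp ((ψ : ℂ) * Complex.I) * Complex.exp (-(ψ : ℂ) * Complex.I) = 1 := by
        have e : (ψ : ℂ) * Complex.I + -(ψ : ℂ) * Complex.I = 0 := by ring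
        rw [← Complex.exp_add, e, Complex.exp_zero]
      have h2 : u ^ d = Complex.exp ((ψ : ℂ) * Complex.I) * Complex.exp ((ψ : ℂ) * Complex.I) := by
        rw [hu' d, ← Complex.exp_add]
        congr 1
        rw [hψ]
        push_cast
        field_simp
        ring
      have h3 : Complex.exp ((ψ : ℂ) * Complex.I) - Complex.exp (-(ψ : ℂ) * Complex.I)
          = 2 * (Real.sin ψ : ℂ) * Complex.I := by
        rw [Complex.exp_mul_I, Complex.exp_mul_I, Complex.cos_neg, Complex.sin_neg,
          ← Complex.ofReal_sin]
        ring
      have hud : u ^ d - 1 = Complex.exp ((ψ : ℂ) * Complex.I)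
          * (2 * (Real.sin ψ : ℂ) * Complex.I) := by
        rw [h2, ← hexp1, ← mul_sub, h3]
      rw [hud, norm_mul, Complex.norm_exp_ofReal_mul_I, one_mul, norm_mul, Complex.norm_I, mul_one,
        norm_mul, Complex.norm_two, Complex.norm_real, Real.norm_eq_abs, abs_of_pos hsinpos]
    rw [hsin, habs, show 2 * π * (d : ℝ) / N = 2 * (π * d / N) by ring, Real.sin_two_mul]
    rw [div_eq_div_iff (by positivity) (by positivity)]
    ring
  have hsum : ∑ j ∈ Finset.univ.erase k, Real.sin (θ j - θ k) / ‖z j - z k‖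
      = ∑ d ∈ Finset.Ico 1 N, Real.cos (π * d / N) / R := by
    refine Finset.sum_nbij' (i := fun j : Fin N => ((j - k : Fin N) : ℕ))
      (j := fun d : ℕ => k + (d : Fin N)) ?_ ?_ ?_ ?_ ?_
    · intro a ha
      have hak : a ≠ k := Finset.ne_of_mem_erase ha
      simp only [Finset.mem_Ico]
      refine ⟨?_, (a - k).isLt⟩
      rcases Nat.eq_zero_or_pos ((a - k : Fin N) : ℕ) with h | h
      · exact absurd (sub_eq_zero.mp (Fin.ext h : a - k = 0)) hak
      · omega
    · intro d hd
      simp only [Finset.mem_Ico] at hd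
      refine Finset.mem_erase.mpr ⟨?_, Finset.mem_univ _⟩
      intro h
      have : (d : Fin N) = 0 := by
        have := congrArg (· - k) h
        simpa [add_sub_cancel_left] using this
      rw [← Fin.val_cast_of_lt hd.2, this] at hd
      simp at hd
    · intro a _
      simp [Fin.cast_val_eq_self]
    · intro d hd
      simp only [Finset.mem_Ico] at hd
      show (((k + (d : Fin N)) - k : Fin N) : ℕ) = d
      rw [add_sub_cancel_left, Fin.val_cast_of_lt hd.2]
    · intro a ha
      exact key a (Finset.ne_of_mem_erase ha)
  rw [hsum, ← Finset.sum_div, cos_sum_zero N hN, zero_div]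
end

section
/- Radius of the static ring phase wave: let N ≥ 2, u = exp(2πi/N) ∈ ℂ, 0 ≤ J < 1, 0 < K < 1, set a = sin(π/N)/(1 − cos(π/N)) and b = sin(3π/N)/(1 − cos(3π/N)) − sin(π/N)/(1 − cos(π/N)), assume 2a + J·b > 0, and define R = (N − 1 + K)/(2a + J·b). Then the ring phase wave configuration z_k = R·u^k, θ_k = 2πk/N + C (for any C ∈ ℝ) is a stationary state of the spatial dynamics: for every index k, (1/(N−1)) ∑_{j≠k} [ ((z_j − z_k)/|z_j − z_k|)·(1 + J·cos(θ_j − θ_k)) − ((z_j − z_k)/|z_j − z_k|²)·(1 − K·cos(θ_j − θ_k)) ] = 0. -/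
set_option maxHeartbeats 1000000
open Finset Real
open Fin.NatCast

private lemma cos_pair' (A B : ℝ) : Real.cos (A - B) - Real.cos (A + B) = 2 * Real.sin A * Real.sin B := by
  rw [Real.cos_sub, Real.cos_add]; ring

private lemma sin_pair' (A B : ℝ) : Real.sin (A + B) - Real.sin (A - B) = 2 * Real.cos A * Real.sin B := by
  rw [Real.sin_add, Real.sin_sub]; ring

private lemma sin_pair2' (A B : ℝ) : Real.sin (A + B) + Real.sin (A - B) = 2 * Real.sin A * Real.cos B := by
  rw [Real.sin_add, Real.sin_sub]; ring

private lemma tel_sin' (N : ℕ) (x : ℝ) :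
    2 * Real.sin (x/2) * ∑ m ∈ Finset.Ico 1 N, Real.sin (m*x)
      = Real.cos (x/2) - Real.cos ((N:ℝ)*x - x/2) := by
  induction N with
  | zero => rw [show ((0:ℕ):ℝ)*x - x/2 = -(x/2) by push_cast; ring, Real.cos_neg]; simp
  | succ n ih =>
    rcases Nat.eq_zero_or_pos n with h | h
    · subst h; simp; ring_nf
    · rw [Finset.sum_Ico_succ_top (by omega), mul_add, ih]
      push_cast
      rw [show ((n:ℝ)+1)*x - x/2 = (n:ℝ)*x + x/2 by ring]
      linear_combination (-1) * cos_pair' ((n:ℝ)*x) (x/2)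

private lemma tel_cos' (N : ℕ) (hN : 1 ≤ N) (x : ℝ) :
    2 * Real.sin (x/2) * ∑ m ∈ Finset.Ico 1 N, Real.cos (m*x)
      = Real.sin ((N:ℝ)*x - x/2) - Real.sin (x/2) := by
  induction N with
  | zero => omega
  | succ n ih =>
    rcases Nat.eq_zero_or_pos n with h | h
    · subst h; simp; ring_nf
    · rw [Finset.sum_Ico_succ_top (by omega), mul_add, ih h]
      push_cast
      rw [show ((n:ℝ)+1)*x - x/2 = (n:ℝ)*x + x/2 by ring]
      linear_combination (-1) * sin_pair' ((n:ℝ)*x) (x/2)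

private lemma half_ids' (x : ℝ) : Real.sin x = 2 * Real.sin (x/2) * Real.cos (x/2) ∧
    1 - Real.cos x = 2 * Real.sin (x/2)^2 := by
  have h1 : Real.sin (2*(x/2)) = 2 * Real.sin (x/2) * Real.cos (x/2) := Real.sin_two_mul _
  have h2 : Real.cos (2*(x/2)) = Real.cos (x/2)^2 - Real.sin (x/2)^2 := Real.cos_two_mul' _
  have h3 := Real.sin_sq_add_cos_sq (x/2)
  rw [show 2*(x/2) = x by ring] at h1 h2
  exact ⟨by linarith, by nlinarith⟩

private lemma sum_sin_cot' (N : ℕ) (x : ℝ) (hs : 0 < Real.sin (x/2))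
    (hC : Real.cos ((N:ℝ)*x - x/2) = - Real.cos (x/2)) :
    ∑ m ∈ Finset.Ico 1 N, Real.sin (m*x) = Real.sin x / (1 - Real.cos x) := by
  have h := tel_sin' N x
  rw [hC] at h
  obtain ⟨h1, h2⟩ := half_ids' x
  rw [h1, h2]
  have hs' := hs.ne'
  field_simp
  nlinarith [h]

private lemma sum_cos_neg_one' (N : ℕ) (hN : 1 ≤ N) (x : ℝ) (hs : Real.sin (x/2) ≠ 0)
    (hC : Real.sin ((N:ℝ)*x - x/2) = - Real.sin (x/2)) :
    ∑ m ∈ Finset.Ico 1 N, Real.cos (m*x) = -1 := by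
  have h := tel_cos' N hN x
  rw [hC] at h
  have h' : 2 * Real.sin (x/2) * ∑ m ∈ Finset.Ico 1 N, Real.cos (m*x)
      = 2 * Real.sin (x/2) * (-1) := by linarith
  exact mul_left_cancel₀ (mul_ne_zero two_ne_zero hs) h'

private lemma S1' (N : ℕ) (hN : 2 ≤ N) :
    ∑ m ∈ Finset.Ico 1 N, Real.sin (m*(Real.pi/N)) = Real.sin (Real.pi/N) / (1 - Real.cos (Real.pi/N)) := by
  have hN0 : (0:ℝ) < N := by positivity
  have hN2 : (2:ℝ) ≤ N := by exact_mod_cast hN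
  apply sum_sin_cot'
  · apply Real.sin_pos_of_pos_of_lt_pi
    · positivity
    · rw [div_div]
      calc Real.pi / (N*2) < Real.pi / 1 := by
            apply div_lt_div_of_pos_left Real.pi_pos (by norm_num) (by nlinarith)
        _ = Real.pi := by ring
  · rw [show (N:ℝ)*(Real.pi/N) - (Real.pi/N)/2 = Real.pi - (Real.pi/N)/2 by field_simp,
      Real.cos_pi_sub]

private lemma S3' (N : ℕ) (hN : 2 ≤ N) :
    ∑ m ∈ Finset.Ico 1 N, Real.sin (m*(3*Real.pi/N)) = Real.sin (3*Real.pi/N) / (1 - Real.cos (3*Real.pi/N)) := by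
  have hN0 : (0:ℝ) < N := by positivity
  have hN2 : (2:ℝ) ≤ N := by exact_mod_cast hN
  apply sum_sin_cot'
  · apply Real.sin_pos_of_pos_of_lt_pi
    · positivity
    · rw [div_div]
      calc 3*Real.pi / (N*2) ≤ 3*Real.pi/4 := by
            apply div_le_div_of_nonneg_left (by positivity) (by norm_num) (by nlinarith)
        _ < Real.pi := by nlinarith [Real.pi_pos]
  · rw [show (N:ℝ)*(3*Real.pi/N) - (3*Real.pi/N)/2 = (Real.pi - (3*Real.pi/N)/2) + 2*Real.pi by
      field_simp; ring, Real.cos_add_two_pi, Real.cos_pi_sub]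

private lemma S2' (N : ℕ) (hN : 2 ≤ N) :
    ∑ m ∈ Finset.Ico 1 N, Real.cos (m*(2*Real.pi/N)) = -1 := by
  have hN0 : (0:ℝ) < N := by positivity
  have hN2 : (2:ℝ) ≤ N := by exact_mod_cast hN
  apply sum_cos_neg_one' N (by omega)
  · apply ne_of_gt
    apply Real.sin_pos_of_pos_of_lt_pi
    · positivity
    · rw [div_div]
      calc 2*Real.pi / (N*2) ≤ 2*Real.pi/4 := by
            apply div_le_div_of_nonneg_left (by positivity) (by norm_num) (by nlinarith)
        _ < Real.pi := by nlinarith [Real.pi_pos]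
  · rw [show (N:ℝ)*(2*Real.pi/N) - (2*Real.pi/N)/2 = (-((2*Real.pi/N)/2)) + 2*Real.pi by
      field_simp; ring, Real.sin_add_two_pi, Real.sin_neg]

private lemma exp2_sub_one' (y : ℝ) :
    Complex.exp (((2*y:ℝ):ℂ) * Complex.I) - 1
      = Complex.exp (((y:ℝ):ℂ) * Complex.I) * (2*Complex.I*((Real.sin y : ℝ):ℂ)) := by
  rw [Complex.exp_mul_I, Complex.exp_mul_I, ← Complex.ofReal_cos, ← Complex.ofReal_sin,
    ← Complex.ofReal_cos, ← Complex.ofReal_sin, Real.sin_two_mul, Real.cos_two_mul']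
  have hsc : ((Real.cos y:ℝ):ℂ)^2 + ((Real.sin y:ℝ):ℂ)^2 = 1 := by
    exact_mod_cast congrArg (Complex.ofReal) (Real.cos_sq_add_sin_sq y)
  push_cast [← Complex.ofReal_cos, ← Complex.ofReal_sin]
  linear_combination hsc + (-2*((Real.sin y:ℝ):ℂ)^2) * Complex.I_sq

private lemma exp_diff' (y : ℝ) :
    Complex.exp (((y:ℝ):ℂ) * Complex.I) - Complex.exp (((-y:ℝ):ℂ) * Complex.I)
      = 2*Complex.I*((Real.sin y : ℝ):ℂ) := by
  rw [Complex.exp_mul_I, Complex.exp_mul_I, Complex.ofReal_neg, Complex.cos_neg,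
    Complex.sin_neg, Complex.ofReal_sin]
  ring


private lemma term_id' (Rr s c1 c2 : ℝ) (E w : ℂ) (hR : 0 < Rr) (hs : 0 < s) :
    ((Rr:ℝ):ℂ) * (w * (E * (2*Complex.I*((s:ℝ):ℂ)))) / (((Rr * (2*s) : ℝ)):ℂ) * ((c1:ℝ):ℂ)
      - ((Rr:ℝ):ℂ) * (w * (E * (2*Complex.I*((s:ℝ):ℂ)))) / ((((Rr * (2*s) : ℝ)):ℂ))^2 * ((c2:ℝ):ℂ)
      = w * Complex.I * (E * ((c1 - c2/(2*Rr*s) : ℝ):ℂ)) := by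
  have hR' : ((Rr:ℝ):ℂ) ≠ 0 := by exact_mod_cast hR.ne'
  have hs' : ((s:ℝ):ℂ) ≠ 0 := by exact_mod_cast hs.ne'
  push_cast
  field_simp

/-- Radius of the static ring phase wave: with `a = sin(π/N)/(1 − cos(π/N))`,
`b = sin(3π/N)/(1 − cos(3π/N)) − sin(π/N)/(1 − cos(π/N))` and
`R = (N − 1 + K)/(2a + Jb)`, the ring phase wave configuration `z_k = R u^k`,
`θ_k = 2πk/N + C` is stationary for the spatial dynamics with phase-dependent
attraction and repulsion. -/
theorem static_ring_phase_wave_radius (N : ℕ) (hN : 2 ≤ N)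
    (u : ℂ) (hu : u = Complex.exp (2 * (Real.pi : ℂ) * Complex.I / (N : ℂ)))
    (J : ℝ) (hJ0 : 0 ≤ J) (hJ1 : J < 1) (K : ℝ) (hK0 : 0 < K) (hK1 : K < 1)
    (a b : ℝ)
    (ha : a = Real.sin (Real.pi / N) / (1 - Real.cos (Real.pi / N)))
    (hb : b = Real.sin (3 * Real.pi / N) / (1 - Real.cos (3 * Real.pi / N))
        - Real.sin (Real.pi / N) / (1 - Real.cos (Real.pi / N)))
    (hpos : 0 < 2 * a + J * b)
    (R : ℝ) (hR : R = ((N : ℝ) - 1 + K) / (2 * a + J * b))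
    (C : ℝ)
    (z : Fin N → ℂ) (hz : ∀ k : Fin N, z k = (R : ℂ) * u ^ ((k : ℕ) + 1))
    (θ : Fin N → ℝ) (hθ : ∀ k : Fin N, θ k = 2 * Real.pi * ((k : ℕ) + 1) / N + C) :
    ∀ k : Fin N, (1 / ((N : ℂ) - 1)) * ∑ j ∈ Finset.univ.erase k,
      ((z j - z k) / ((‖z j - z k‖ : ℝ) : ℂ)
          * (((1 + J * Real.cos (θ j - θ k) : ℝ) : ℂ))
        - (z j - z k) / (((‖z j - z k‖ : ℝ) : ℂ) ^ 2)
          * (((1 - K * Real.cos (θ j - θ k) : ℝ) : ℂ))) = 0 := by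
  intro k
  have hN0 : (0:ℝ) < N := by positivity
  have hNR : ((N:ℝ)) ≠ 0 := ne_of_gt hN0
  have hN2 : (2:ℝ) ≤ N := by exact_mod_cast hN
  have hq : (0:ℝ) < (N:ℝ) - 1 + K := by linarith
  have hR0 : 0 < R := by rw [hR]; positivity
  have hNe : NeZero N := ⟨by omega⟩
  -- the summand as a function
  set F : Fin N → ℂ := fun j =>
      (z j - z k) / ((‖z j - z k‖ : ℝ) : ℂ)
          * (((1 + J * Real.cos (θ j - θ k) : ℝ) : ℂ))
        - (z j - z k) / (((‖z j - z k‖ : ℝ) : ℂ) ^ 2)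
          * (((1 - K * Real.cos (θ j - θ k) : ℝ) : ℂ)) with hF
  -- u basics
  have hu' : ∀ n : ℕ, u ^ n = Complex.exp (((2*Real.pi*n/N : ℝ):ℂ) * Complex.I) := by
    intro n
    rw [hu, ← Complex.exp_nat_mul]
    congr 1
    push_cast
    ring
  have huN : u ^ N = 1 := by
    rw [hu' N, show (2*Real.pi*(N:ℝ)/N : ℝ) = 2*Real.pi by field_simp]
    push_cast
    exact Complex.exp_two_pi_mul_I
  have hmod : ∀ n : ℕ, u ^ (n % N) = u ^ n := by
    intro n
    conv_rhs => rw [← Nat.div_add_mod n N]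
    rw [pow_add, pow_mul, huN, one_pow, one_mul]
  set v : ℂ := u ^ ((k:ℕ)+1) with hv
  -- the reduced summand
  set G : ℕ → ℂ := fun mm =>
    Complex.exp ((((mm:ℝ)*(Real.pi/N) : ℝ):ℂ) * Complex.I) *
      (((1 + J * Real.cos ((mm:ℝ)*(2*Real.pi/N)))
        - (1 - K * Real.cos ((mm:ℝ)*(2*Real.pi/N))) / (2*R*Real.sin ((mm:ℝ)*(Real.pi/N))) : ℝ) : ℂ)
    with hG
  -- sin positivity on the range
  have hsy : ∀ mm : ℕ, 1 ≤ mm → mm < N → 0 < Real.sin ((mm:ℝ)*(Real.pi/N)) := by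
    intro mm h1 h2
    apply Real.sin_pos_of_pos_of_lt_pi
    · have : (1:ℝ) ≤ (mm:ℝ) := by exact_mod_cast h1
      have := Real.pi_pos
      nlinarith [mul_pos (show (0:ℝ) < mm by linarith) (show (0:ℝ) < Real.pi/N by positivity)]
    · have hmN : (mm:ℝ) < N := by exact_mod_cast h2
      calc (mm:ℝ)*(Real.pi/N) < (N:ℝ)*(Real.pi/N) := by
            apply mul_lt_mul_of_pos_right hmN (by positivity)
        _ = Real.pi := by field_simp
  -- step: per-term reduction
  have key : ∀ mm : ℕ, 1 ≤ mm → mm < N → F (k + (mm : Fin N)) = v * Complex.I * G mm := by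
    intro mm h1 h2
    have hs := hsy mm h1 h2
    set y := (mm:ℝ)*(Real.pi/N) with hy
    set j : Fin N := k + (mm : Fin N) with hj
    have hjv : (j:ℕ) = ((k:ℕ) + mm) % N := by
      rw [hj, Fin.val_add, Fin.val_natCast, Nat.mod_eq_of_lt h2]
    have hpow : u ^ ((j:ℕ)+1) = v * u ^ mm := by
      rw [hjv, pow_succ, hmod, show (k:ℕ)+mm = ((k:ℕ)+1) + mm - 1 by omega, hv]
      rw [show ((k:ℕ)+1) + mm - 1 = (k:ℕ) + mm by omega, show (k:ℕ)+1 = 1 + (k:ℕ) by omega]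
      rw [pow_add, pow_add, pow_one]
      ring
    have hzz : z j - z k = (R:ℂ) * (v * (u ^ mm - 1)) := by
      rw [hz j, hz k, hpow]; ring
    have hum : u ^ mm - 1 = Complex.exp (((y:ℝ):ℂ) * Complex.I) * (2*Complex.I*((Real.sin y:ℝ):ℂ)) := by
      rw [← exp2_sub_one' y, hu' mm]
      norm_cast
      rw [show (2*y : ℝ) = 2*Real.pi*mm/N by rw [hy]; ring]
    have hvabs : ‖v‖ = 1 := by
      rw [hv, hu' ((k:ℕ)+1), Complex.norm_exp_ofReal_mul_I]
    have habs : ‖z j - z k‖ = R * (2 * Real.sin y) := by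
      rw [hzz, norm_mul, norm_mul, hum, norm_mul, norm_mul, norm_mul]
      rw [Complex.norm_real, Real.norm_eq_abs, abs_of_pos hR0, Complex.norm_exp_ofReal_mul_I, hvabs,
        Complex.norm_two, Complex.norm_I, Complex.norm_real, Real.norm_eq_abs, abs_of_pos hs]
      ring
    have hcosd : Real.cos (θ j - θ k) = Real.cos ((mm:ℝ)*(2*Real.pi/N)) := by
      obtain ⟨t, hnat⟩ : ∃ t, ((k:ℕ)+mm) % N + N*t = (k:ℕ)+mm := ⟨_, Nat.mod_add_div _ _⟩
      have hmd : ((j:ℕ):ℝ) = (k:ℕ) + mm - (N:ℝ)*(t:ℝ) := by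
        rw [hjv]
        have hc := congrArg (Nat.cast : ℕ → ℝ) hnat
        push_cast at hc
        linarith
      rw [hθ j, hθ k]
      rw [show 2*Real.pi*(((j:ℕ):ℝ)+1)/N + C - (2*Real.pi*(((k:ℕ):ℝ)+1)/N + C)
          = (mm:ℝ)*(2*Real.pi/N) - ((t:ℤ):ℝ)*(2*Real.pi) by
        rw [hmd]; push_cast; field_simp; ring]
      rw [Real.cos_sub_int_mul_two_pi]
    simp only [hF, hG]
    rw [habs, hcosd, hzz, hum]
    exact term_id' R (Real.sin y) _ _ _ _ hR0 hs
  -- step: the real sum vanishes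
  have hreal : ∑ mm ∈ Finset.Ico 1 N,
      (2*Real.sin ((mm:ℝ)*(Real.pi/N)) * (1 + J * Real.cos ((mm:ℝ)*(2*Real.pi/N)))
        - (1 - K * Real.cos ((mm:ℝ)*(2*Real.pi/N))) / R) = 0 := by
    have hptw : ∀ mm : ℕ,
        2*Real.sin ((mm:ℝ)*(Real.pi/N)) * (1 + J * Real.cos ((mm:ℝ)*(2*Real.pi/N)))
          - (1 - K * Real.cos ((mm:ℝ)*(2*Real.pi/N))) / R
        = 2*Real.sin ((mm:ℝ)*(Real.pi/N)) + J * Real.sin ((mm:ℝ)*(3*Real.pi/N))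
          - J * Real.sin ((mm:ℝ)*(Real.pi/N)) + (K/R) * Real.cos ((mm:ℝ)*(2*Real.pi/N)) - 1/R := by
      intro mm
      have hp := sin_pair2' ((mm:ℝ)*(Real.pi/N)) ((mm:ℝ)*(2*Real.pi/N))
      rw [show (mm:ℝ)*(Real.pi/N) + (mm:ℝ)*(2*Real.pi/N) = (mm:ℝ)*(3*Real.pi/N) by ring,
        show (mm:ℝ)*(Real.pi/N) - (mm:ℝ)*(2*Real.pi/N) = -((mm:ℝ)*(Real.pi/N)) by ring,
        Real.sin_neg] at hp
      linear_combination (-J) * hp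
    rw [Finset.sum_congr rfl fun mm _ => hptw mm]
    simp only [Finset.sum_add_distrib, Finset.sum_sub_distrib, ← Finset.mul_sum,
      Finset.sum_const, Nat.card_Ico, nsmul_eq_mul]
    rw [S1' N hN, S3' N hN, S2' N hN, ← ha]
    have h3 : Real.sin (3*Real.pi/N) / (1 - Real.cos (3*Real.pi/N)) = a + b := by
      rw [hb, ha]; ring
    rw [h3, Nat.cast_sub (by omega), Nat.cast_one]
    have hab : R * (2*a + J*b) = (N:ℝ) - 1 + K := by
      rw [hR]; field_simp
    field_simp
    linear_combination hab
  -- step: pairing identity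
  have pair : ∀ mm ∈ Finset.Ico 1 N, G mm + G (N - mm) = Complex.I *
      (((2*Real.sin ((mm:ℝ)*(Real.pi/N)) * (1 + J * Real.cos ((mm:ℝ)*(2*Real.pi/N)))
        - (1 - K * Real.cos ((mm:ℝ)*(2*Real.pi/N))) / R) : ℝ) : ℂ) := by
    intro mm hmm
    simp only [Finset.mem_Ico] at hmm
    obtain ⟨h1, h2⟩ := hmm
    have hs := hsy mm h1 h2
    have hc : ((N - mm : ℕ):ℝ) = (N:ℝ) - mm := by
      push_cast [Nat.cast_sub (le_of_lt h2)]; ring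
    have harg1 : ((N-mm:ℕ):ℝ)*(Real.pi/N) = Real.pi - (mm:ℝ)*(Real.pi/N) := by
      rw [hc]; field_simp
    have harg2 : ((N-mm:ℕ):ℝ)*(2*Real.pi/N) = -((mm:ℝ)*(2*Real.pi/N)) + 2*Real.pi := by
      rw [hc]; field_simp; ring
    simp only [hG]
    rw [harg1, harg2, Real.cos_add_two_pi, Real.cos_neg, Real.sin_pi_sub]
    rw [show ((Real.pi - (mm:ℝ)*(Real.pi/N) : ℝ):ℂ) * Complex.I
        = (Real.pi:ℂ)*Complex.I + (((-((mm:ℝ)*(Real.pi/N)) : ℝ)):ℂ)*Complex.I by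
      push_cast; ring]
    rw [Complex.exp_add, Complex.exp_pi_mul_I]
    set sy := Real.sin ((mm:ℝ)*(Real.pi/N)) with hsy'
    set c1 := 1 + J * Real.cos ((mm:ℝ)*(2*Real.pi/N)) with hc1
    set c2 := 1 - K * Real.cos ((mm:ℝ)*(2*Real.pi/N)) with hc2
    have hcoef : (c1 - c2/(2*R*sy)) * (2*sy) = 2*sy*c1 - c2/R := by
      field_simp
    have hcoefC : ((c1 - c2/(2*R*sy) : ℝ):ℂ) * (2*((sy:ℝ):ℂ)) = ((2*sy*c1 - c2/R : ℝ):ℂ) := by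
      rw [← hcoef]; push_cast; ring
    have hd := exp_diff' ((mm:ℝ)*(Real.pi/N))
    linear_combination (((c1 - c2/(2*R*sy) : ℝ)):ℂ) * hd + Complex.I * hcoefC
  -- step: reflection
  have hrefl : ∑ mm ∈ Finset.Ico 1 N, G (N - mm) = ∑ mm ∈ Finset.Ico 1 N, G mm := by
    apply Finset.sum_nbij' (i := fun mm => N - mm) (j := fun mm => N - mm)
    · intro a ha'; simp only [Finset.mem_Ico] at *; omega
    · intro a ha'; simp only [Finset.mem_Ico] at *; omega
    · intro a ha'; simp only [Finset.mem_Ico] at *; omega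
    · intro a ha'; simp only [Finset.mem_Ico] at *; omega
    · intro a ha'; rfl
  -- conclude the G-sum vanishes
  have hGsum : ∑ mm ∈ Finset.Ico 1 N, G mm = 0 := by
    have h2 : (2:ℂ) * ∑ mm ∈ Finset.Ico 1 N, G mm
        = ∑ mm ∈ Finset.Ico 1 N, (G mm + G (N - mm)) := by
      rw [Finset.sum_add_distrib, two_mul, hrefl]
    rw [Finset.sum_congr rfl pair, ← Finset.mul_sum, ← Complex.ofReal_sum, hreal] at h2
    simpa using h2
  -- assemble
  have hstep : ∑ j ∈ Finset.univ.erase k, F j = 0 := by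
    have hFk : F k = 0 := by simp [hF, sub_self]
    rw [Finset.sum_erase _ hFk]
    have e2 : ∑ j : Fin N, F j = ∑ m : Fin N, F (k + m) :=
      (Fintype.sum_equiv (Equiv.addLeft k) _ _ (fun m => rfl)).symm
    rw [e2]
    have e3 : ∑ m : Fin N, F (k + m) = ∑ mm ∈ Finset.range N, F (k + (mm : Fin N)) := by
      rw [← Fin.sum_univ_eq_sum_range (fun mm => F (k + (mm : Fin N))) N]
      exact Finset.sum_congr rfl fun m _ => by rw [Fin.cast_val_eq_self]
    rw [e3, Finset.range_eq_Ico, Finset.sum_eq_sum_Ico_succ_bot (by omega : 0 < N)]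
    rw [show ((0:ℕ) : Fin N) = 0 from rfl, add_zero, hFk, zero_add]
    rw [Finset.sum_congr rfl (fun mm hmm => by
      simp only [Finset.mem_Ico] at hmm
      exact key mm hmm.1 hmm.2), ← Finset.mul_sum, hGsum, mul_zero]
  rw [hstep, mul_zero]
end
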